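/- arXiv:2105.14339 — 5 statements merged into one kernel-verified Lean document; each statement's English description precedes it below -/
import Mathlib

section
/- Let n ≥ 1 and s ≥ 1, and let G be a finite simple graph whose vertex set is partitioned into s sets A_1, ..., A_s, each of cardinality n, such that each induced subgraph G[A_i] is a complete graph, every edge of G joining vertices of different parts lies in a fixed matching M (i.e., each vertex of G is incident with at most one edge whose endpoints lie in different parts, and all such cross edges are pairwise non-adjacent). Then G is well-f-covered, and if n ≥ 3 then f(G) = 2s. -/
/-- `X` induces a forest in `G`: the subgraph induced by `X` is acyclic. -/
def IsInducedForest {V : Type*} (G : SimpleGraph V) (X : Finset V) : Prop :=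
  (G.induce (X : Set V)).IsAcyclic

/-- `X` is a maximal induced forest of `G`. -/
def IsMaximalInducedForest {V : Type*} (G : SimpleGraph V) (X : Finset V) : Prop :=
  IsInducedForest G X ∧ ∀ Y : Finset V, X ⊂ Y → ¬ IsInducedForest G Y

/-- The forest number of `G`: maximum cardinality of an induced forest. -/
noncomputable def forestNum {V : Type*} (G : SimpleGraph V) : ℕ :=
  sSup {n | ∃ X : Finset V, IsInducedForest G X ∧ X.card = n}

/-- `G` is well-f-covered: all maximal induced forests have the same cardinality. -/
def WellFCovered {V : Type*} (G : SimpleGraph V) : Prop :=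
  ∀ X Y : Finset V, IsMaximalInducedForest G X → IsMaximalInducedForest G Y →
    X.card = Y.card

def IsIndepFinset {V : Type*} (G : SimpleGraph V) (X : Finset V) : Prop :=
  ∀ ⦃u⦄, u ∈ X → ∀ ⦃v⦄, v ∈ X → ¬ G.Adj u v

def IsMaximalIndepSet {V : Type*} (G : SimpleGraph V) (X : Finset V) : Prop :=
  IsIndepFinset G X ∧ ∀ Y : Finset V, X ⊂ Y → ¬ IsIndepFinset G Y

noncomputable def indepNum {V : Type*} (G : SimpleGraph V) : ℕ :=
  sSup {n | ∃ X : Finset V, IsIndepFinset G X ∧ X.card = n}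

def WellCovered {V : Type*} (G : SimpleGraph V) : Prop :=
  ∀ X Y : Finset V, IsMaximalIndepSet G X → IsMaximalIndepSet G Y → X.card = Y.card

/-- The join of two graphs on disjoint vertex sets. -/
def joinGraph {V W : Type*} (G : SimpleGraph V) (H : SimpleGraph W) :
    SimpleGraph (V ⊕ W) where
  Adj a b :=
    match a, b with
    | Sum.inl u, Sum.inl v => G.Adj u v
    | Sum.inr u, Sum.inr v => H.Adj u v
    | Sum.inl _, Sum.inr _ => True
    | Sum.inr _, Sum.inl _ => True
  symm := ⟨by rintro (u|u) (v|v) h <;> first | exact h.symm | trivial⟩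
  loopless := ⟨by rintro (u|u) h <;> exact SimpleGraph.irrefl _ h⟩

section Aux
set_option linter.unusedVariables false
set_option linter.unusedSectionVars false

open SimpleGraph

variable {V : Type*} [DecidableEq V] {G : SimpleGraph V} {s : Set V}

namespace SimpleGraph.Walk

/-- Transfer a walk whose support lies in `s` to the induced graph on `s`. -/
def induceW : ∀ {u v : V} (p : G.Walk u v) (hs : ∀ x ∈ p.support, x ∈ s),
    (G.induce s).Walk ⟨u, hs u p.start_mem_support⟩ ⟨v, hs v p.end_mem_support⟩
  | _, _, nil, _ => nil
  | _, _, cons h p, hs =>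
      cons (by exact h) (p.induceW fun x hx => hs x (by simp [hx]))

theorem induceW_map (p : G.Walk u v) (hs : ∀ x ∈ p.support, x ∈ s) :
    (p.induceW hs).map (Embedding.induce s).toHom = p := by
  induction p with
  | nil => rfl
  | cons h p ih => exact congrArg (cons h) (ih _)

end SimpleGraph.Walk

theorem isInducedForest_iff' {X : Finset V} :
    IsInducedForest G X ↔
      ∀ (u : V) (c : G.Walk u u), c.IsCycle → ¬(∀ x ∈ c.support, x ∈ X) := by
  constructor
  · intro hf u c hc hsupp
    have hs : ∀ x ∈ c.support, x ∈ (X : Set V) := fun x hx => hsupp x hx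
    have hcyc : (c.induceW hs).IsCycle := by
      rw [← Walk.map_isCycle_iff_of_injective (p := c.induceW hs)
        (f := (Embedding.induce (X : Set V)).toHom) (by exact Subtype.val_injective),
        Walk.induceW_map]
      exact hc
    exact hf _ hcyc
  · intro h a c hc
    have hc' : (c.map (Embedding.induce (X : Set V)).toHom).IsCycle :=
      Walk.IsCycle.map (f := (Embedding.induce (X : Set V)).toHom) (by exact Subtype.val_injective) hc
    refine h _ _ hc' ?_
    intro x hx
    rw [Walk.support_map, List.mem_map] at hx
    obtain ⟨y, -, rfl⟩ := hx
    exact y.2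

theorem forest'_mono {X Y : Finset V} (h : X ⊆ Y) (hY : IsInducedForest G Y) :
    IsInducedForest G X := by
  rw [isInducedForest_iff'] at *
  exact fun u c hc hs => hY u c hc fun x hx => h (hs x hx)

theorem blocked_lemma {X : Finset V} {v : V} (hX : IsInducedForest G X) (hv : v ∉ X)
    (hnot : ¬ IsInducedForest G (insert v X)) :
    ∃ a b, a ∈ X ∧ b ∈ X ∧ a ≠ b ∧ G.Adj v a ∧ G.Adj v b ∧
      ∃ p : G.Walk a b, p.IsPath ∧ ∀ x ∈ p.support, x ∈ X := by
  rw [isInducedForest_iff'] at hnot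
  push_neg at hnot
  obtain ⟨u, c, hc, hsupp⟩ := hnot
  have hvc : v ∈ c.support := by
    by_contra hvc
    rw [isInducedForest_iff'] at hX
    refine hX u c hc fun x hx => ?_
    rcases Finset.mem_insert.mp (hsupp x hx) with rfl | h
    · exact absurd hx hvc
    · exact h
  set c' := c.rotate v hvc with hc'def
  have hc' : c'.IsCycle := hc.rotate hvc
  have hsupp' : ∀ x ∈ c'.support, x ∈ insert v X := by
    intro x hx
    rcases (Walk.mem_support_iff _).mp hx with rfl | hx'
    · exact Finset.mem_insert_self _ _
    · exact hsupp x <| List.mem_of_mem_tail <| (c.support_rotate v hvc).mem_iff.mp hx'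
  clear_value c'
  cases c' with
  | nil => exact absurd rfl hc'.ne_nil
  | cons hva q =>
    rename_i a
    rw [Walk.cons_isCycle_iff] at hc'
    obtain ⟨hq, hedge⟩ := hc'
    obtain ⟨b, hvb, r, hqr⟩ := Walk.exists_eq_cons_of_ne hva.ne q.reverse
    have hvbq : s(v, b) ∈ q.edges := by
      rw [← List.mem_reverse, ← Walk.edges_reverse, hqr]
      exact List.mem_cons_self
    have hab : a ≠ b := by
      rintro rfl
      exact hedge hvbq
    have hqrev : q.reverse.IsPath := hq.reverse
    rw [hqr, Walk.cons_isPath_iff] at hqrev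
    obtain ⟨hr, hvr⟩ := hqrev
    have hsub : ∀ x ∈ r.support, x ∈ X := by
      intro x hx
      have hx1 : x ∈ q.support := by
        rw [← List.mem_reverse, ← Walk.support_reverse, hqr]
        exact List.mem_cons_of_mem _ hx
      have hx2 : x ∈ insert v X := hsupp' x (by rw [Walk.support_cons]; exact List.mem_cons_of_mem _ hx1)
      rcases Finset.mem_insert.mp hx2 with rfl | h
      · exact absurd hx hvr
      · exact h
    refine ⟨a, b, ?_, ?_, hab, hva, hvb, r.reverse, hr.reverse, ?_⟩
    · exact hsub a r.end_mem_support
    · exact hsub b r.start_mem_support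
    · intro x hx
      rw [Walk.support_reverse, List.mem_reverse] at hx
      exact hsub x hx

theorem insert_forest {X : Finset V} {v : V} (hX : IsInducedForest G X) (hv : v ∉ X)
    (h1 : ∀ a b, a ∈ X → b ∈ X → G.Adj v a → G.Adj v b →
      (∃ p : G.Walk a b, p.IsPath ∧ ∀ x ∈ p.support, x ∈ X) → a = b) :
    IsInducedForest G (insert v X) := by
  by_contra hnot
  obtain ⟨a, b, ha, hb, hab, hva, hvb, hp⟩ := blocked_lemma hX hv hnot
  exact hab (h1 a b ha hb hva hvb hp)

theorem not_forest_triangle {X : Finset V} {a b c : V} (hab : G.Adj a b) (hbc : G.Adj b c)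
    (hca : G.Adj c a) (ha : a ∈ X) (hb : b ∈ X) (hc : c ∈ X) :
    ¬ IsInducedForest G X := by
  rw [isInducedForest_iff']
  push_neg
  refine ⟨a, Walk.cons hab (Walk.cons hbc (Walk.cons hca Walk.nil)), ?_, ?_⟩
  · rw [Walk.cons_isCycle_iff, Walk.cons_isPath_iff, Walk.cons_isPath_iff]
    refine ⟨⟨⟨Walk.IsPath.nil, by simp [hca.ne]⟩, by simp [hbc.ne, hab.ne']⟩, ?_⟩
    simp only [Walk.edges_cons, Walk.edges_nil, List.mem_cons, List.not_mem_nil, or_false]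
    rintro (h | h) <;> rw [Sym2.eq_iff] at h <;>
      rcases h with ⟨h1, h2⟩ | ⟨h1, h2⟩ <;> subst_vars <;>
      first | exact hab.ne rfl | exact hbc.ne rfl | exact hca.ne rfl
  · intro x hx
    simp only [Walk.support_cons, Walk.support_nil, List.mem_cons] at hx
    rcases hx with rfl | rfl | rfl | rfl | h
    · exact ha
    · exact hb
    · exact hc
    · exact ha
    · exact absurd h List.not_mem_nil

theorem maximal_iff' {X : Finset V} :
    (IsInducedForest G X ∧ ∀ Y : Finset V, X ⊂ Y → ¬ IsInducedForest G Y) ↔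
      (IsInducedForest G X ∧ ∀ v ∉ X, ¬ IsInducedForest G (insert v X)) := by
  constructor
  · rintro ⟨h1, h2⟩
    exact ⟨h1, fun v hv => h2 _ (Finset.ssubset_insert hv)⟩
  · rintro ⟨h1, h2⟩
    refine ⟨h1, fun Y hY hfY => ?_⟩
    obtain ⟨v, hvY, hvX⟩ := Finset.exists_of_ssubset hY
    exact h2 v hvX (forest'_mono (Finset.insert_subset hvY hY.subset) hfY)

theorem exists_maximal' [Fintype V] (X₀ : Finset V) (h0 : IsInducedForest G X₀) :
    ∃ X : Finset V, X₀ ⊆ X ∧ IsInducedForest G X ∧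
      ∀ Y : Finset V, X ⊂ Y → ¬ IsInducedForest G Y := by
  classical
  obtain ⟨X, hX, hmax⟩ := Finset.exists_max_image
    ((Finset.univ : Finset (Finset V)).filter fun Y => X₀ ⊆ Y ∧ IsInducedForest G Y)
    Finset.card ⟨X₀, by simp [h0]⟩
  simp only [Finset.mem_filter, Finset.mem_univ, true_and] at hX hmax
  refine ⟨X, hX.1, hX.2, fun Y hY hfY => ?_⟩
  have := hmax Y ⟨hX.1.trans hY.subset, hfY⟩
  exact absurd (Finset.card_lt_card hY) (by omega)

theorem internal_two_nbrs {a b x : V} (p : G.Walk a b) (hp : p.IsPath) (hx : x ∈ p.support)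
    (hxa : x ≠ a) (hxb : x ≠ b) :
    ∃ y z, y ∈ p.support ∧ z ∈ p.support ∧ y ≠ z ∧ G.Adj x y ∧ G.Adj x z := by
  induction p with
  | nil => simp at hx; exact absurd hx hxa
  | @cons a c b h q ih =>
    rw [Walk.support_cons, List.mem_cons] at hx
    rcases hx with rfl | hx
    · exact absurd rfl hxa
    rw [Walk.cons_isPath_iff] at hp
    by_cases hxc : x = c
    · subst hxc
      cases q with
      | nil => exact absurd rfl hxb
      | @cons c d b h' r =>
        refine ⟨a, d, ?_, ?_, ?_, h.symm, h'⟩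
        · simp
        · simp
        · rintro rfl
          exact hp.2 (by simp)
    · obtain ⟨y, z, hy, hz, hyz, hxy, hxz⟩ := ih hp.1 hx hxc hxb
      exact ⟨y, z, by simp [hy], by simp [hz], hyz, hxy, hxz⟩

theorem path_prefix : ∀ {u b1 b2 : V} (X : Finset V) (p : G.Walk u b1) (q : G.Walk u b2),
    p.IsPath → q.IsPath → (∀ x ∈ p.support, x ∈ X) → (∀ x ∈ q.support, x ∈ X) →
    (∀ x ∈ X, ∀ y ∈ X, ∀ z ∈ X, ∀ w ∈ X,
      G.Adj x y → G.Adj x z → G.Adj x w → y = z ∨ y = w ∨ z = w) →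
    (∀ y ∈ X, ∀ z ∈ X, G.Adj u y → G.Adj u z → y = z) →
    p.support <+: q.support ∨ q.support <+: p.support
  | u, _, b2, X, Walk.nil, q, _, _, _, _, _, _ => by
    left
    rw [Walk.support_nil]
    exact ⟨q.support.tail, q.support_eq_cons.symm⟩
  | u, b1, _, X, p, Walk.nil, _, _, _, _, _, _ => by
    right
    rw [Walk.support_nil]
    exact ⟨p.support.tail, p.support_eq_cons.symm⟩
  | u, b1, b2, X, Walk.cons hc p', Walk.cons hd q', hp, hq, hpX, hqX, h2, h1 => by
    rename_i c d
    have hcd : c = d := by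
      refine h1 c ?_ d ?_ hc hd
      · exact hpX c (by simp)
      · exact hqX d (by simp)
    subst hcd
    rw [Walk.cons_isPath_iff] at hp hq
    have hrec := path_prefix (X.erase u) p' q' hp.1 hq.1
      (fun x hx => Finset.mem_erase.mpr ⟨fun h => hp.2 (h ▸ hx), hpX x (by simp [hx])⟩)
      (fun x hx => Finset.mem_erase.mpr ⟨fun h => hq.2 (h ▸ hx), hqX x (by simp [hx])⟩)
      (fun x hx y hy z hz w hw => h2 x (Finset.mem_of_mem_erase hx) y (Finset.mem_of_mem_erase hy)
        z (Finset.mem_of_mem_erase hz) w (Finset.mem_of_mem_erase hw))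
      (fun y hy z hz hcy hcz => by
        have hcX : c ∈ X := hpX c (by simp)
        have huX : u ∈ X := hpX u (by simp)
        rcases h2 c hcX u huX y (Finset.mem_of_mem_erase hy) z (Finset.mem_of_mem_erase hz)
          hc.symm hcy hcz with h | h | h
        · exact absurd h.symm (Finset.ne_of_mem_erase hy)
        · exact absurd h.symm (Finset.ne_of_mem_erase hz)
        · exact h)
    rcases hrec with h | h
    · obtain ⟨t, ht⟩ := h
      left; rw [Walk.support_cons, Walk.support_cons]; exact ⟨t, by simp [ht]⟩
    · obtain ⟨t, ht⟩ := h
      right; rw [Walk.support_cons, Walk.support_cons]; exact ⟨t, by simp [ht]⟩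

section Parts

variable {σ : ℕ} {part : V → Fin σ}

theorem le2 (hcomplete : ∀ u v : V, u ≠ v → part u = part v → G.Adj u v)
    {X : Finset V} (hX : IsInducedForest G X) (i : Fin σ) :
    (X.filter fun v => part v = i).card ≤ 2 := by
  by_contra h
  push_neg at h
  obtain ⟨a, b, c, ha, hb, hc, hab, hac, hbc⟩ := Finset.two_lt_card_iff.mp h
  simp only [Finset.mem_filter] at ha hb hc
  exact not_forest_triangle (hcomplete a b hab (ha.2.trans hb.2.symm))
    (hcomplete b c hbc (hb.2.trans hc.2.symm)) (hcomplete c a hac.symm (hc.2.trans ha.2.symm))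
    ha.1 hb.1 hc.1 hX

theorem deg2 (hcomplete : ∀ u v : V, u ≠ v → part u = part v → G.Adj u v)
    (hmatching : ∀ v a b : V, G.Adj v a → G.Adj v b →
      part v ≠ part a → part v ≠ part b → a = b)
    {X : Finset V} (hX : IsInducedForest G X) :
    ∀ x ∈ X, ∀ y ∈ X, ∀ z ∈ X, ∀ w ∈ X,
      G.Adj x y → G.Adj x z → G.Adj x w → y = z ∨ y = w ∨ z = w := by
  intro x hx y hy z hz w hw hxy hxz hxw
  by_contra hcon
  push_neg at hcon
  obtain ⟨hyz, hyw, hzw⟩ := hcon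
  have same : ∀ p q : V, p ∈ X → q ∈ X → G.Adj x p → G.Adj x q → p ≠ q →
      part p = part x → part q = part x → False := by
    intro p q hp hq hxp hxq hpq hppart hqpart
    exact not_forest_triangle hxp (hcomplete p q hpq (hppart.trans hqpart.symm)) hxq.symm
      hx hp hq hX
  by_cases h1 : part y = part x <;> by_cases h2 : part z = part x <;>
    by_cases h3 : part w = part x
  · exact same y z hy hz hxy hxz hyz h1 h2
  · exact same y z hy hz hxy hxz hyz h1 h2
  · exact same y w hy hw hxy hxw hyw h1 h3
  · exact hzw (hmatching x z w hxz hxw (fun h => h2 h.symm) (fun h => h3 h.symm))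
  · exact same z w hz hw hxz hxw hzw h2 h3
  · exact hyw (hmatching x y w hxy hxw (fun h => h1 h.symm) (fun h => h3 h.symm))
  · exact hyz (hmatching x y z hxy hxz (fun h => h1 h.symm) (fun h => h2 h.symm))
  · exact hyz (hmatching x y z hxy hxz (fun h => h1 h.symm) (fun h => h2 h.symm))

end Parts

section Main

variable {σ ν : ℕ} {part : V → Fin σ}

theorem part_card_two [Fintype V]
    (hsize : ∀ i : Fin σ, (Finset.univ.filter fun v => part v = i).card = ν)
    (hcomplete : ∀ u v : V, u ≠ v → part u = part v → G.Adj u v)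
    (hmatching : ∀ v a b : V, G.Adj v a → G.Adj v b →
      part v ≠ part a → part v ≠ part b → a = b)
    (hn3 : 3 ≤ ν) {X : Finset V}
    (hX : IsInducedForest G X) (hmax : ∀ v ∉ X, ¬ IsInducedForest G (insert v X))
    (i : Fin σ) : (X.filter fun v => part v = i).card = 2 := by
  have hle := le2 hcomplete hX i
  by_contra hne
  have hcard : (X.filter fun v => part v = i).card ≤ 1 := by omega
  rcases Nat.le_one_iff_eq_zero_or_eq_one.mp hcard with h0 | h1
  · -- empty case: any vertex of part i can be added
    rw [Finset.card_eq_zero] at h0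
    have hnemp : ∃ w, part w = i := by
      have := hsize i
      have hpos : 0 < (Finset.univ.filter fun v => part v = i).card := by omega
      obtain ⟨w, hw⟩ := Finset.card_pos.mp hpos
      exact ⟨w, (Finset.mem_filter.mp hw).2⟩
    obtain ⟨w, hw⟩ := hnemp
    have hwX : w ∉ X := by
      intro h
      have : w ∈ X.filter fun v => part v = i := Finset.mem_filter.mpr ⟨h, hw⟩
      simp [h0] at this
    refine hmax w hwX (insert_forest hX hwX ?_)
    intro a b ha hb hwa hwb _
    have hpa : part w ≠ part a := by
      intro h
      have : a ∈ X.filter fun v => part v = i := Finset.mem_filter.mpr ⟨ha, (h.symm.trans hw)⟩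
      simp [h0] at this
    have hpb : part w ≠ part b := by
      intro h
      have : b ∈ X.filter fun v => part v = i := Finset.mem_filter.mpr ⟨hb, (h.symm.trans hw)⟩
      simp [h0] at this
    exact hmatching w a b hwa hwb hpa hpb
  · -- singleton case
    obtain ⟨u, hu⟩ := Finset.card_eq_one.mp h1
    have huX' : u ∈ X.filter fun v => part v = i := by
      rw [hu]; exact Finset.mem_singleton_self u
    have huX : u ∈ X := (Finset.mem_filter.mp huX').1
    have hupart : part u = i := (Finset.mem_filter.mp huX').2
    have huniq : ∀ v ∈ X, part v = i → v = u := by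
      intro v hv hvp
      have : v ∈ X.filter fun x => part x = i := Finset.mem_filter.mpr ⟨hv, hvp⟩
      rw [hu, Finset.mem_singleton] at this
      exact this
    -- two candidates
    have hT : 1 < ((Finset.univ.filter fun v => part v = i).erase u).card := by
      rw [Finset.card_erase_of_mem (Finset.mem_filter.mpr ⟨Finset.mem_univ u, hupart⟩), hsize i]
      omega
    obtain ⟨w1, hw1, w2, hw2, hw12⟩ := Finset.one_lt_card.mp hT
    have hw1part : part w1 = i := (Finset.mem_filter.mp (Finset.mem_of_mem_erase hw1)).2
    have hw2part : part w2 = i := (Finset.mem_filter.mp (Finset.mem_of_mem_erase hw2)).2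
    have hw1u : w1 ≠ u := Finset.ne_of_mem_erase hw1
    have hw2u : w2 ≠ u := Finset.ne_of_mem_erase hw2
    have hwX : ∀ w, part w = i → w ≠ u → w ∉ X := by
      intro w hwp hwu hmem
      exact hwu (huniq w hmem hwp)
    -- each candidate is blocked through a cross neighbor with a path from u
    have getP : ∀ w, part w = i → w ≠ u → ∃ p, p ∈ X ∧ G.Adj w p ∧ part p ≠ i ∧
        ∃ P : G.Walk u p, P.IsPath ∧ ∀ x ∈ P.support, x ∈ X := by
      intro w hwp hwu
      have hwnX : w ∉ X := hwX w hwp hwu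
      obtain ⟨a, b, haX, hbX, hab, hwa, hwb, P, hP, hPs⟩ :=
        blocked_lemma hX hwnX (hmax w hwnX)
      by_cases hpa : part a = i
      · have hau : a = u := huniq a haX hpa
        subst hau
        have hpb : part b ≠ i := by
          intro h
          exact hab (huniq b hbX h).symm
        exact ⟨b, hbX, hwb, hpb, P, hP, hPs⟩
      · by_cases hpb : part b = i
        · have hbu : b = u := huniq b hbX hpb
          subst hbu
          exact ⟨a, haX, hwa, hpa, P.reverse, hP.reverse, fun x hx => hPs x
            (by rwa [Walk.support_reverse, List.mem_reverse] at hx)⟩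
        · exact absurd (hmatching w a b hwa hwb (fun h => hpa (h.symm.trans hwp))
            (fun h => hpb (h.symm.trans hwp))) hab
    obtain ⟨p1, hp1X, hadj1, hp1part, P1, hP1, hs1⟩ := getP w1 hw1part hw1u
    obtain ⟨p2, hp2X, hadj2, hp2part, P2, hP2, hs2⟩ := getP w2 hw2part hw2u
    have hp12 : p1 ≠ p2 := by
      rintro rfl
      exact hw12 (hmatching p1 w1 w2 hadj1.symm hadj2.symm
        (fun h => hp1part (h.trans hw1part)) (fun h => hp1part (h.trans hw2part)))
    have h2 := deg2 hcomplete hmatching hX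
    have h1 : ∀ y ∈ X, ∀ z ∈ X, G.Adj u y → G.Adj u z → y = z := by
      intro y hy z hz huy huz
      have hpy : part u ≠ part y := by
        intro h
        have hyu : y = u := huniq y hy (h.symm.trans hupart)
        exact G.irrefl (hyu ▸ huy)
      have hpz : part u ≠ part z := by
        intro h
        have hzu : z = u := huniq z hz (h.symm.trans hupart)
        exact G.irrefl (hzu ▸ huz)
      exact hmatching u y z huy huz hpy hpz
    -- a cross neighbor p (of some blocked candidate w) has at most one neighbor in X
    have key : ∀ w p, part w = i → w ≠ u → p ∈ X → G.Adj w p → part p ≠ i →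
        ∀ y ∈ X, ∀ z ∈ X, G.Adj p y → G.Adj p z → y = z := by
      intro w p hwp hwu hpX hadj hppart y hy z hz hpy hpz
      by_contra hyz
      by_cases hyp : part y = part p
      · by_cases hzp : part z = part p
        · have : 2 < (X.filter fun v => part v = part p).card := by
            refine Finset.two_lt_card_iff.mpr ⟨y, z, p, Finset.mem_filter.mpr ⟨hy, hyp⟩,
              Finset.mem_filter.mpr ⟨hz, hzp⟩, Finset.mem_filter.mpr ⟨hpX, rfl⟩, hyz, ?_, ?_⟩
            · exact hpy.ne'
            · exact hpz.ne'
          exact absurd (le2 hcomplete hX (part p)) (by omega)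
        · have hzw : z = w := hmatching p z w hpz hadj.symm (fun h => hzp h.symm)
            (fun h => hppart (h.trans hwp))
          exact hwX w hwp hwu (hzw ▸ hz)
      · have hyw : y = w := hmatching p y w hpy hadj.symm (fun h => hyp h.symm)
          (fun h => hppart (h.trans hwp))
        exact hwX w hwp hwu (hyw ▸ hy)
    rcases path_prefix X P1 P2 hP1 hP2 hs1 hs2 h2 h1 with hpre | hpre
    · have hp1mem : p1 ∈ P2.support := hpre.subset P1.end_mem_support
      obtain ⟨y, z, hy, hz, hyz, hpy, hpz⟩ := internal_two_nbrs P2 hP2 hp1mem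
        (fun h => hp1part (h ▸ hupart : part p1 = i)) hp12
      exact hyz (key w1 p1 hw1part hw1u hp1X hadj1 hp1part y (hs2 y hy) z (hs2 z hz) hpy hpz)
    · have hp2mem : p2 ∈ P1.support := hpre.subset P2.end_mem_support
      obtain ⟨y, z, hy, hz, hyz, hpy, hpz⟩ := internal_two_nbrs P1 hP1 hp2mem
        (fun h => hp2part (h ▸ hupart : part p2 = i)) (Ne.symm hp12)
      exact hyz (key w2 p2 hw2part hw2u hp2X hadj2 hp2part y (hs1 y hy) z (hs1 z hz) hpy hpz)

end Main

theorem exists_nbr_of_start {a b : V} (p : G.Walk a b) (h : a ≠ b) :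
    ∃ d ∈ p.support, G.Adj a d := by
  cases p with
  | nil => exact absurd rfl h
  | cons h' r => exact ⟨_, by simp, h'⟩

theorem reach_closed {S : Finset V} (hcl : ∀ x ∈ S, ∀ y, G.Adj x y → y ∈ S)
    {v x : V} (hv : v ∈ S) (h : G.Reachable v x) : x ∈ S := by
  obtain ⟨w⟩ := h
  induction w with
  | nil => exact hv
  | cons h' p ih => exact ih (hcl _ hv _ h')

theorem missing_component {X : Finset V} {v : V}
    (hdeg : ∀ x y z w : V, G.Adj x y → G.Adj x z → G.Adj x w → y = z ∨ y = w ∨ z = w)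
    (hX : IsInducedForest G X) (hv : v ∉ X) (hb : ¬ IsInducedForest G (insert v X)) :
    ∃ S : Finset V, v ∈ S ∧ (∀ x ∈ S, x = v ∨ x ∈ X) ∧
      (∀ x ∈ S, G.Reachable v x) ∧
      (∀ x ∈ S, ∀ y, G.Adj x y → y ∈ S) ∧
      (∀ Y : Finset V, IsInducedForest G Y → ¬ (S ⊆ Y)) := by
  obtain ⟨a, b, haX, hbX, hab, hva, hvb, P, hP, hPs⟩ := blocked_lemma hX hv hb
  have hvP : v ∉ P.support := fun h => hv (hPs v h)
  refine ⟨insert v P.support.toFinset, Finset.mem_insert_self _ _, ?_, ?_, ?_, ?_⟩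
  · intro x hx
    rcases Finset.mem_insert.mp hx with rfl | hx
    · exact Or.inl rfl
    · exact Or.inr (hPs x (List.mem_toFinset.mp hx))
  · intro x hx
    rcases Finset.mem_insert.mp hx with rfl | hx
    · exact Reachable.refl x
    · have hx' : x ∈ (Walk.cons hva P).support := by
        rw [Walk.support_cons]
        exact List.mem_cons_of_mem _ (List.mem_toFinset.mp hx)
      exact ⟨(Walk.cons hva P).takeUntil x hx'⟩
  · intro x hx y hxy
    have haS : a ∈ insert v P.support.toFinset :=
      Finset.mem_insert_of_mem (List.mem_toFinset.mpr P.start_mem_support)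
    have hbS : b ∈ insert v P.support.toFinset :=
      Finset.mem_insert_of_mem (List.mem_toFinset.mpr P.end_mem_support)
    rcases Finset.mem_insert.mp hx with rfl | hx
    · rcases hdeg x y a b hxy hva hvb with rfl | rfl | rfl
      · exact haS
      · exact hbS
      · exact absurd rfl hab
    · rw [List.mem_toFinset] at hx
      by_cases hxa : x = a
      · subst hxa
        obtain ⟨d, hd, had⟩ := exists_nbr_of_start P hab
        rcases hdeg x y v d hxy hva.symm had with rfl | rfl | rfl
        · exact Finset.mem_insert_self _ _
        · exact Finset.mem_insert_of_mem (List.mem_toFinset.mpr hd)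
        · exact absurd hd hvP
      · by_cases hxb : x = b
        · subst hxb
          obtain ⟨d, hd, had⟩ := exists_nbr_of_start P.reverse (Ne.symm hab)
          rw [Walk.support_reverse, List.mem_reverse] at hd
          rcases hdeg x y v d hxy hvb.symm had with rfl | rfl | rfl
          · exact Finset.mem_insert_self _ _
          · exact Finset.mem_insert_of_mem (List.mem_toFinset.mpr hd)
          · exact absurd hd hvP
        · obtain ⟨y0, z0, hy0, hz0, hy0z0, hxy0, hxz0⟩ :=
            internal_two_nbrs P hP hx hxa hxb
          rcases hdeg x y y0 z0 hxy hxy0 hxz0 with rfl | rfl | rfl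
          · exact Finset.mem_insert_of_mem (List.mem_toFinset.mpr hy0)
          · exact Finset.mem_insert_of_mem (List.mem_toFinset.mpr hz0)
          · exact absurd rfl hy0z0
  · intro Y hY hSY
    rw [isInducedForest_iff'] at hY
    have hconc : (P.concat hvb.symm).IsPath := by
      rw [Walk.concat_eq_append, Walk.isPath_def, Walk.support_append, Walk.support_cons]
      simp only [Walk.support_nil, List.tail_cons]
      rw [List.nodup_append]
      refine ⟨hP.support_nodup, List.nodup_singleton v, ?_⟩
      intro x hx
      simp only [List.mem_singleton]
      rintro _ rfl rfl
      exact hvP hx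
    have hedge : s(v, a) ∉ (P.concat hvb.symm).edges := by
      rw [Walk.concat_eq_append, Walk.edges_append]
      simp only [List.mem_append, Walk.edges_cons, Walk.edges_nil, List.mem_singleton]
      rintro (h | h)
      · exact hvP (Walk.fst_mem_support_of_mem_edges P h)
      · rw [Sym2.eq_iff] at h
        rcases h with ⟨h1, h2⟩ | ⟨h1, h2⟩
        · exact hv (by rw [h1]; exact hbX)
        · exact hab h2
    refine hY v (Walk.cons hva (P.concat hvb.symm)) ?_ ?_
    · exact (Walk.cons_isCycle_iff _ _).mpr ⟨hconc, hedge⟩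
    · intro x hx
      rw [Walk.support_cons, List.mem_cons] at hx
      rcases hx with rfl | hx
      · exact hSY (Finset.mem_insert_self _ _)
      · rw [Walk.concat_eq_append, Walk.support_append, Walk.support_cons] at hx
        simp only [Walk.support_nil, List.tail_cons, List.mem_append, List.mem_singleton] at hx
        rcases hx with hx | rfl
        · exact hSY (Finset.mem_insert_of_mem (List.mem_toFinset.mpr hx))
        · exact hSY (Finset.mem_insert_self _ _)

theorem no_two_missing (hdeg : ∀ x y z w : V, G.Adj x y → G.Adj x z → G.Adj x w →
      y = z ∨ y = w ∨ z = w)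
    {X : Finset V} (hXf : IsInducedForest G X)
    (hXm : ∀ v ∉ X, ¬ IsInducedForest G (insert v X))
    {v1 v2 : V} (h1 : v1 ∉ X) (h2 : v2 ∉ X) (h12 : v1 ≠ v2)
    (hr : G.Reachable v1 v2) : False := by
  obtain ⟨S, hvS, helems, _, hcl, _⟩ := missing_component hdeg hXf h1 (hXm v1 h1)
  rcases helems v2 (reach_closed hcl hvS hr) with h | h
  · exact h12 h.symm
  · exact h2 h

theorem compl_card_le [Fintype V]
    (hdeg : ∀ x y z w : V, G.Adj x y → G.Adj x z → G.Adj x w → y = z ∨ y = w ∨ z = w)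
    {X Y : Finset V} (hXf : IsInducedForest G X)
    (hXm : ∀ v ∉ X, ¬ IsInducedForest G (insert v X))
    (hYf : IsInducedForest G Y) :
    (Finset.univ \ X).card ≤ (Finset.univ \ Y).card := by
  classical
  have hex : ∀ v : V, ∃ w, v ∉ X → w ∉ Y ∧ G.Reachable v w := by
    intro v
    by_cases hv : v ∈ X
    · exact ⟨v, fun h => absurd hv h⟩
    · obtain ⟨S, hvS, helems, hreach, hcl, hmiss⟩ :=
        missing_component hdeg hXf hv (hXm v hv)
      obtain ⟨w, hwS, hwY⟩ := Finset.not_subset.mp (hmiss Y hYf)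
      exact ⟨w, fun _ => ⟨hwY, hreach w hwS⟩⟩
  choose f hf using hex
  refine Finset.card_le_card_of_injOn f ?_ ?_
  · intro v hv
    rw [Finset.mem_coe, Finset.mem_sdiff] at hv ⊢
    exact ⟨Finset.mem_univ _, (hf v hv.2).1⟩
  · intro v1 hv1 v2 hv2 hfeq
    rw [Finset.coe_sdiff, Set.mem_diff] at hv1 hv2
    by_contra h12
    have hr1 := (hf v1 (fun h => hv1.2 h)).2
    have hr2 := (hf v2 (fun h => hv2.2 h)).2
    exact no_two_missing hdeg hXf hXm (fun h => hv1.2 h) (fun h => hv2.2 h) h12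
      (hr1.trans (hfeq ▸ hr2.symm))

theorem card_eq_small [Fintype V]
    (hdeg : ∀ x y z w : V, G.Adj x y → G.Adj x z → G.Adj x w → y = z ∨ y = w ∨ z = w)
    {X Y : Finset V} (hXf : IsInducedForest G X)
    (hXm : ∀ v ∉ X, ¬ IsInducedForest G (insert v X))
    (hYf : IsInducedForest G Y)
    (hYm : ∀ v ∉ Y, ¬ IsInducedForest G (insert v Y)) :
    X.card = Y.card := by
  have h1 := compl_card_le hdeg hXf hXm hYf
  have h2 := compl_card_le hdeg hYf hYm hXf
  have e1 : (Finset.univ \ X).card = Fintype.card V - X.card := by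
    rw [Finset.card_sdiff_of_subset (Finset.subset_univ X), Finset.card_univ]
  have e2 : (Finset.univ \ Y).card = Fintype.card V - Y.card := by
    rw [Finset.card_sdiff_of_subset (Finset.subset_univ Y), Finset.card_univ]
  have c1 : X.card ≤ Fintype.card V := by rw [← Finset.card_univ]; exact Finset.card_le_card (Finset.subset_univ X)
  have c2 : Y.card ≤ Fintype.card V := by rw [← Finset.card_univ]; exact Finset.card_le_card (Finset.subset_univ Y)
  omega

theorem forest'_empty : IsInducedForest G (∅ : Finset V) := by
  rw [isInducedForest_iff']
  intro u c hc hs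
  exact absurd (hs u c.start_mem_support) (by simp)

theorem deg2_global [Fintype V] {σ ν : ℕ} {part : V → Fin σ}
    (hsize : ∀ i : Fin σ, (Finset.univ.filter fun v => part v = i).card = ν)
    (hcomplete : ∀ u v : V, u ≠ v → part u = part v → G.Adj u v)
    (hmatching : ∀ v a b : V, G.Adj v a → G.Adj v b →
      part v ≠ part a → part v ≠ part b → a = b)
    (hν : ν ≤ 2) :
    ∀ x y z w : V, G.Adj x y → G.Adj x z → G.Adj x w → y = z ∨ y = w ∨ z = w := by
  intro x y z w hxy hxz hxw
  by_contra hcon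
  push_neg at hcon
  obtain ⟨hyz, hyw, hzw⟩ := hcon
  have same : ∀ p q : V, G.Adj x p → G.Adj x q → p ≠ q →
      part p = part x → part q = part x → False := by
    intro p q hxp hxq hpq hpp hqp
    have : 2 < (Finset.univ.filter fun v => part v = part x).card := by
      refine Finset.two_lt_card_iff.mpr ⟨x, p, q, by simp, by simp [hpp], by simp [hqp],
        hxp.ne, hxq.ne, hpq⟩
    rw [hsize (part x)] at this
    omega
  by_cases h1 : part y = part x <;> by_cases h2 : part z = part x <;>
    by_cases h3 : part w = part x
  · exact same y z hxy hxz hyz h1 h2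
  · exact same y z hxy hxz hyz h1 h2
  · exact same y w hxy hxw hyw h1 h3
  · exact hzw (hmatching x z w hxz hxw (fun h => h2 h.symm) (fun h => h3 h.symm))
  · exact same z w hxz hxw hzw h2 h3
  · exact hyw (hmatching x y w hxy hxw (fun h => h1 h.symm) (fun h => h3 h.symm))
  · exact hyz (hmatching x y z hxy hxz (fun h => h1 h.symm) (fun h => h2 h.symm))
  · exact hyz (hmatching x y z hxy hxz (fun h => h1 h.symm) (fun h => h2 h.symm))

theorem stmt12' {V : Type*} [Fintype V] [DecidableEq V] (G : SimpleGraph V)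
    (n s : ℕ) (hn : 1 ≤ n) (hs : 1 ≤ s) (part : V → Fin s)
    (hsize : ∀ i : Fin s, (Finset.univ.filter fun v => part v = i).card = n)
    (hcomplete : ∀ u v : V, u ≠ v → part u = part v → G.Adj u v)
    (hmatching : ∀ v a b : V, G.Adj v a → G.Adj v b →
      part v ≠ part a → part v ≠ part b → a = b) :
    (∀ X Y : Finset V,
      (IsInducedForest G X ∧ ∀ Z : Finset V, X ⊂ Z → ¬ IsInducedForest G Z) →
      (IsInducedForest G Y ∧ ∀ Z : Finset V, Y ⊂ Z → ¬ IsInducedForest G Z) →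
      X.card = Y.card) ∧
    (3 ≤ n → sSup {m | ∃ X : Finset V, IsInducedForest G X ∧ X.card = m} = 2 * s) := by
  classical
  -- card of any maximal forest when 3 ≤ n
  have hmaxcard : 3 ≤ n → ∀ X : Finset V, IsInducedForest G X →
      (∀ v ∉ X, ¬ IsInducedForest G (insert v X)) → X.card = 2 * s := by
    intro hn3 X hf hm
    rw [Finset.card_eq_sum_card_fiberwise (f := part) (t := Finset.univ)
      (fun x _ => Finset.mem_univ _)]
    rw [Finset.sum_congr rfl (fun i _ => part_card_two hsize hcomplete hmatching hn3 hf hm i)]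
    simp [Finset.card_univ, mul_comm]
  constructor
  · intro X Y hX hY
    have hX' := maximal_iff'.mp hX
    have hY' := maximal_iff'.mp hY
    by_cases hn3 : 3 ≤ n
    · rw [hmaxcard hn3 X hX'.1 hX'.2, hmaxcard hn3 Y hY'.1 hY'.2]
    · have hdeg := deg2_global (G := G) hsize hcomplete hmatching (by omega)
      exact card_eq_small hdeg hX'.1 hX'.2 hY'.1 hY'.2
  · intro hn3
    obtain ⟨X, -, hXf, hXm⟩ := exists_maximal' (∅ : Finset V) forest'_empty
    have hXm' := (maximal_iff'.mp ⟨hXf, hXm⟩).2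
    have hmem : 2 * s ∈ {m | ∃ X : Finset V, IsInducedForest G X ∧ X.card = m} :=
      ⟨X, hXf, hmaxcard hn3 X hXf hXm'⟩
    have hub : ∀ m ∈ {m | ∃ X : Finset V, IsInducedForest G X ∧ X.card = m}, m ≤ 2 * s := by
      rintro m ⟨Z, hZf, rfl⟩
      rw [Finset.card_eq_sum_card_fiberwise (f := part) (t := Finset.univ)
        (fun x _ => Finset.mem_univ _)]
      calc ∑ i, (Z.filter fun v => part v = i).card ≤ ∑ _i : Fin s, 2 :=
            Finset.sum_le_sum (fun i _ => le2 hcomplete hZf i)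
        _ = 2 * s := by simp [mul_comm]
    exact le_antisymm (csSup_le ⟨2 * s, hmem⟩ hub) (le_csSup ⟨2 * s, hub⟩ hmem)

end Aux

/-- Let the vertex set of `G` be partitioned into `s` parts, each of
cardinality `n`, each inducing a complete graph, and suppose every edge joining
vertices of different parts lies in a fixed matching (each vertex is incident with at
most one such cross edge). Then `G` is well-f-covered, and if `n ≥ 3` then
`f(G) = 2s`. -/
theorem stmt12 {V : Type*} [Fintype V] [DecidableEq V] (G : SimpleGraph V)
    (n s : ℕ) (hn : 1 ≤ n) (hs : 1 ≤ s) (part : V → Fin s)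
    (hsize : ∀ i : Fin s, (Finset.univ.filter fun v => part v = i).card = n)
    (hcomplete : ∀ u v : V, u ≠ v → part u = part v → G.Adj u v)
    (hmatching : ∀ v a b : V, G.Adj v a → G.Adj v b →
      part v ≠ part a → part v ≠ part b → a = b) :
    WellFCovered G ∧ (3 ≤ n → forestNum G = 2 * s) := by
  obtain ⟨h1, h2⟩ := stmt12' G n s hn hs part hsize hcomplete hmatching
  exact ⟨h1, h2⟩
end

section
/- Let G and H be finite simple graphs on disjoint vertex sets, each having at least one edge, and suppose G has no maximal independent set of cardinality 1. Then the join G ∨ H is well-f-covered if and only if all of the following hold: (1) G and H are well-f-covered; (2) G is well-covered and any two maximal independent sets of H of cardinality at least 2 have the same cardinality; (3) f(G) = f(H) = α(G) + 1 = α(H) + 1. In that case f(G ∨ H) = f(G) = f(H). -/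
section Helpers
set_option linter.unusedSectionVars false
set_option linter.unusedVariables false

open SimpleGraph Sum

lemma acyclic_of_emb {α β : Type*} {Γ : SimpleGraph α} {Δ : SimpleGraph β}
    (f : Γ ↪g Δ) (h : Δ.IsAcyclic) : Γ.IsAcyclic := by
  intro v p hp
  exact h (p.map f.toHom) (hp.map f.injective)

lemma isAcyclic_of_no_adj {β : Type*} {Γ : SimpleGraph β} (h : ∀ a b, ¬Γ.Adj a b) :
    Γ.IsAcyclic := by
  intro v p hp
  cases p with
  | nil => exact hp.ne_nil rfl
  | cons ha q => exact h _ _ ha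

lemma isAcyclic_of_star {β : Type*} {Γ : SimpleGraph β} (c : β)
    (h : ∀ a b, Γ.Adj a b → a = c ∨ b = c) : Γ.IsAcyclic := by
  intro v p hp
  have key : ∀ (x y z : β), Γ.Adj x y → Γ.Adj y z → x ≠ z → y = c := by
    intro x y z hxy hyz hxz
    rcases h _ _ hxy with h1 | h1
    · rcases h _ _ hyz with h2 | h2
      · exact h2
      · exact absurd (h1.trans h2.symm) hxz
    · exact h1
  have h3len := hp.three_le_length
  cases p with
  | nil => exact hp.ne_nil rfl
  | cons h1 q =>
    cases q with
    | nil => simp at h3len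
    | cons h2 r =>
      cases r with
      | nil => simp at h3len
      | cons h3 q' =>
        rename_i a b d
        have hnd := hp.2
        simp only [SimpleGraph.Walk.support_cons, List.tail_cons, List.nodup_cons] at hnd
        have hvq : v ∈ q'.support := SimpleGraph.Walk.end_mem_support q'
        have hdq : d ∈ q'.support := SimpleGraph.Walk.start_mem_support q'
        have hvb : v ≠ b := fun hvb => hnd.2.1 (hvb ▸ hvq)
        have had : a ≠ d := fun had => hnd.1 (List.mem_cons_of_mem _ (had ▸ hdq))
        have hac : a = c := key v a b h1 h2 hvb
        have hbc : b = c := key a b d h2 h3 had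
        exact Γ.irrefl (hac ▸ hbc ▸ h2)

lemma not_acyclic_of_triangle {β : Type*} {Γ : SimpleGraph β} {a b c : β}
    (hab : Γ.Adj a b) (hbc : Γ.Adj b c) (hca : Γ.Adj c a) : ¬ Γ.IsAcyclic := by
  intro hacyc
  refine hacyc (SimpleGraph.Walk.cons hab (SimpleGraph.Walk.cons hbc
    (SimpleGraph.Walk.cons hca SimpleGraph.Walk.nil))) ?_
  rw [SimpleGraph.Walk.isCycle_def]
  refine ⟨?_, by simp, ?_⟩
  · rw [SimpleGraph.Walk.isTrail_def]
    simp [Sym2.eq_iff]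
    have h1 := hab.ne
    have h2 := hbc.ne
    have h3 := hca.ne
    tauto
  · simp
    have h2 := hbc.ne
    have h3 := hca.ne
    have h1 := hab.ne
    tauto

lemma not_acyclic_of_square {β : Type*} {Γ : SimpleGraph β} {a b c d : β}
    (hab : Γ.Adj a b) (hbc : Γ.Adj b c) (hcd : Γ.Adj c d) (hda : Γ.Adj d a)
    (hac : a ≠ c) (hbd : b ≠ d) : ¬ Γ.IsAcyclic := by
  intro hacyc
  refine hacyc (SimpleGraph.Walk.cons hab (SimpleGraph.Walk.cons hbc
    (SimpleGraph.Walk.cons hcd (SimpleGraph.Walk.cons hda SimpleGraph.Walk.nil)))) ?_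
  rw [SimpleGraph.Walk.isCycle_def]
  have h1 := hab.ne
  have h2 := hbc.ne
  have h3 := hcd.ne
  have h4 := hda.ne
  refine ⟨?_, by simp, ?_⟩
  · rw [SimpleGraph.Walk.isTrail_def]
    simp [Sym2.eq_iff]
    tauto
  · simp
    tauto

section Basics
variable {α : Type*} [Fintype α] [DecidableEq α] {Γ : SimpleGraph α}

/-- embedding between induced subgraphs from set inclusion -/
def embOfSubset (Γ : SimpleGraph α) {s t : Set α} (h : s ⊆ t) : Γ.induce s ↪g Γ.induce t where
  toFun x := ⟨x.1, h x.2⟩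
  inj' := by intro a b hab; simpa [Subtype.ext_iff] using hab
  map_rel_iff' := Iff.rfl

lemma forest_mono {X Y : Finset α} (h : X ⊆ Y) (hY : IsInducedForest Γ Y) :
    IsInducedForest Γ X :=
  acyclic_of_emb (embOfSubset Γ (by exact_mod_cast h)) hY

lemma forest_of_indep {X : Finset α} (h : IsIndepFinset Γ X) : IsInducedForest Γ X := by
  apply isAcyclic_of_no_adj
  rintro ⟨a, ha⟩ ⟨b, hb⟩ hab
  exact h (by simpa using ha) (by simpa using hb) hab

lemma forest_insert_of_indep {X : Finset α} (h : IsIndepFinset Γ X) (v : α) :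
    IsInducedForest Γ (insert v X) := by
  apply isAcyclic_of_star (⟨v, by simp⟩ : ((insert v X : Finset α) : Set α))
  rintro ⟨a, ha⟩ ⟨b, hb⟩ hab
  simp only [Finset.coe_insert, Set.mem_insert_iff, Finset.mem_coe] at ha hb
  rcases ha with ha | ha
  · exact Or.inl (Subtype.ext ha)
  · rcases hb with hb | hb
    · exact Or.inr (Subtype.ext hb)
    · exact absurd hab (h ha hb)

lemma exists_maximal_forest_ext (Γ : SimpleGraph α) (X : Finset α)
    (hX : IsInducedForest Γ X) : ∃ Y, X ⊆ Y ∧ IsMaximalInducedForest Γ Y := by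
  classical
  let s : Finset (Finset α) := Finset.univ.filter (fun Y => X ⊆ Y ∧ IsInducedForest Γ Y)
  have hsne : s.Nonempty := ⟨X, by simp [s, hX]⟩
  obtain ⟨Y, hYs, hmax⟩ := s.exists_max_image Finset.card hsne
  simp only [s, Finset.mem_filter, Finset.mem_univ, true_and] at hYs
  refine ⟨Y, hYs.1, hYs.2, ?_⟩
  intro Z hZ hZf
  have hZs : Z ∈ s := by simp [s, hZf, hYs.1.trans hZ.subset]
  exact absurd (hmax Z hZs) (by simpa using Finset.card_lt_card hZ)

lemma maximal_forest_iff_insert {X : Finset α} :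
    IsMaximalInducedForest Γ X ↔
      IsInducedForest Γ X ∧ ∀ v ∉ X, ¬ IsInducedForest Γ (insert v X) := by
  constructor
  · intro ⟨h1, h2⟩
    exact ⟨h1, fun v hv => h2 _ (Finset.ssubset_insert hv)⟩
  · intro ⟨h1, h2⟩
    refine ⟨h1, fun Y hY hYf => ?_⟩
    obtain ⟨v, hvY, hvX⟩ := Finset.exists_of_ssubset hY
    exact h2 v hvX (forest_mono (Finset.insert_subset hvY hY.subset) hYf)

lemma indep_mono {X Y : Finset α} (h : X ⊆ Y) (hY : IsIndepFinset Γ Y) :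
    IsIndepFinset Γ X := fun u hu v hv => hY (h hu) (h hv)

lemma exists_maximal_indep_ext (Γ : SimpleGraph α) (X : Finset α)
    (hX : IsIndepFinset Γ X) : ∃ Y, X ⊆ Y ∧ IsMaximalIndepSet Γ Y := by
  classical
  let s : Finset (Finset α) := Finset.univ.filter (fun Y => X ⊆ Y ∧ IsIndepFinset Γ Y)
  have hsne : s.Nonempty := ⟨X, by simp [s, hX]⟩
  obtain ⟨Y, hYs, hmax⟩ := s.exists_max_image Finset.card hsne
  simp only [s, Finset.mem_filter, Finset.mem_univ, true_and] at hYs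
  refine ⟨Y, hYs.1, hYs.2, ?_⟩
  intro Z hZ hZf
  have hZs : Z ∈ s := by simp [s, hZf, hYs.1.trans hZ.subset]
  exact absurd (hmax Z hZs) (by simpa using Finset.card_lt_card hZ)

lemma maximal_indep_iff_insert {X : Finset α} :
    IsMaximalIndepSet Γ X ↔
      IsIndepFinset Γ X ∧ ∀ v ∉ X, ¬ IsIndepFinset Γ (insert v X) := by
  constructor
  · intro ⟨h1, h2⟩
    exact ⟨h1, fun v hv => h2 _ (Finset.ssubset_insert hv)⟩
  · intro ⟨h1, h2⟩
    refine ⟨h1, fun Y hY hYf => ?_⟩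
    obtain ⟨v, hvY, hvX⟩ := Finset.exists_of_ssubset hY
    exact h2 v hvX (indep_mono (Finset.insert_subset hvY hY.subset) hYf)

lemma forestNum_bdd (Γ : SimpleGraph α) :
    BddAbove {n | ∃ X : Finset α, IsInducedForest Γ X ∧ X.card = n} := by
  refine ⟨Fintype.card α, ?_⟩
  rintro n ⟨X, _, rfl⟩
  exact Finset.card_le_univ X

lemma le_forestNum {X : Finset α} (hX : IsInducedForest Γ X) : X.card ≤ forestNum Γ :=
  le_csSup (forestNum_bdd Γ) ⟨X, hX, rfl⟩

lemma exists_forest_card_forestNum (Γ : SimpleGraph α) :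
    ∃ X : Finset α, IsInducedForest Γ X ∧ X.card = forestNum Γ := by
  have hne : {n | ∃ X : Finset α, IsInducedForest Γ X ∧ X.card = n}.Nonempty :=
    ⟨0, ∅, forest_of_indep (by intro u hu; simp at hu), by simp⟩
  exact Nat.sSup_mem hne (forestNum_bdd Γ)

lemma forestNum_eq_of_wfc (hwfc : WellFCovered Γ) {F : Finset α}
    (hF : IsMaximalInducedForest Γ F) : forestNum Γ = F.card := by
  refine le_antisymm ?_ (le_forestNum hF.1)
  obtain ⟨X, hXf, hXc⟩ := exists_forest_card_forestNum Γ
  obtain ⟨Y, hXY, hY⟩ := exists_maximal_forest_ext Γ X hXf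
  calc forestNum Γ = X.card := hXc.symm
    _ ≤ Y.card := Finset.card_le_card hXY
    _ = F.card := hwfc Y F hY hF

lemma indepNum_bdd (Γ : SimpleGraph α) :
    BddAbove {n | ∃ X : Finset α, IsIndepFinset Γ X ∧ X.card = n} := by
  refine ⟨Fintype.card α, ?_⟩
  rintro n ⟨X, _, rfl⟩
  exact Finset.card_le_univ X

lemma le_indepNum {X : Finset α} (hX : IsIndepFinset Γ X) : X.card ≤ _root_.indepNum Γ :=
  le_csSup (indepNum_bdd Γ) ⟨X, hX, rfl⟩

lemma exists_indep_card_indepNum (Γ : SimpleGraph α) :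
    ∃ X : Finset α, IsIndepFinset Γ X ∧ X.card = _root_.indepNum Γ := by
  have hne : {n | ∃ X : Finset α, IsIndepFinset Γ X ∧ X.card = n}.Nonempty :=
    ⟨0, ∅, by intro u hu; simp at hu, by simp⟩
  exact Nat.sSup_mem hne (indepNum_bdd Γ)

lemma indepNum_eq_of_wc (hwc : WellCovered Γ) {A : Finset α}
    (hA : IsMaximalIndepSet Γ A) : _root_.indepNum Γ = A.card := by
  refine le_antisymm ?_ (le_indepNum hA.1)
  obtain ⟨X, hXf, hXc⟩ := exists_indep_card_indepNum Γ
  obtain ⟨Y, hXY, hY⟩ := exists_maximal_indep_ext Γ X hXf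
  calc _root_.indepNum Γ = X.card := hXc.symm
    _ ≤ Y.card := Finset.card_le_card hXY
    _ = A.card := hwc Y A hY hA

lemma not_indep_iff {X : Finset α} :
    ¬ IsIndepFinset Γ X ↔ ∃ u ∈ X, ∃ v ∈ X, Γ.Adj u v := by
  unfold IsIndepFinset
  push_neg
  rfl

lemma maximal_forest_not_indep (hGe : ∃ u v, Γ.Adj u v) {F : Finset α}
    (hF : IsMaximalInducedForest Γ F) : ¬ IsIndepFinset Γ F := by
  intro hind
  obtain ⟨u, v, huv⟩ := hGe
  have : ∃ w, w ∉ F := by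
    by_contra hall
    push_neg at hall
    exact hind (hall u) (hall v) huv
  obtain ⟨w, hw⟩ := this
  exact (maximal_forest_iff_insert.mp hF).2 w hw (forest_insert_of_indep hind w)

lemma two_le_card_maximal_indep (hGe : ∃ u v, Γ.Adj u v)
    (hG1 : ¬ ∃ X : Finset α, IsMaximalIndepSet Γ X ∧ X.card = 1)
    {A : Finset α} (hA : IsMaximalIndepSet Γ A) : 2 ≤ A.card := by
  rcases Nat.lt_or_ge A.card 2 with h | h
  · interval_cases h' : A.card
    · obtain ⟨u, v, huv⟩ := hGe
      have := Finset.card_eq_zero.mp h'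
      refine absurd (hA.2 {u} (by simp [this])) ?_
      simp only [not_not]
      intro a ha b hb
      simp only [Finset.mem_singleton] at ha hb
      subst ha; subst hb; exact Γ.irrefl.elim ∘ id
    · exact absurd ⟨A, hA, h'⟩ hG1
  · exact h

lemma nonadj_pair_of_forest_card_three {X : Finset α} (h : IsInducedForest Γ X)
    (h3 : 3 ≤ X.card) : ∃ x y : α, x ≠ y ∧ ¬ Γ.Adj x y := by
  by_contra hc
  push_neg at hc
  obtain ⟨x, hx⟩ := Finset.card_pos.mp (show 0 < X.card by omega)
  obtain ⟨y, hy, hyx⟩ := Finset.exists_mem_ne (show 1 < X.card by omega) x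
  have hxy' : (X.erase x).card ≥ 2 := by
    rw [Finset.card_erase_of_mem hx]; omega
  have h2 : ((X.erase x).erase y).card ≥ 1 := by
    rw [Finset.card_erase_of_mem (Finset.mem_erase.mpr ⟨hyx, hy⟩)]; omega
  obtain ⟨z, hz⟩ := Finset.card_pos.mp (show 0 < ((X.erase x).erase y).card by omega)
  have hzy : z ≠ y := (Finset.mem_erase.mp hz).1
  have hzx : z ≠ x := (Finset.mem_erase.mp (Finset.mem_erase.mp hz).2).1
  have hzX : z ∈ X := Finset.mem_of_mem_erase (Finset.mem_of_mem_erase hz)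
  exact not_acyclic_of_triangle
    (a := (⟨x, by simpa using hx⟩ : ((X : Finset α) : Set α)))
    (b := ⟨y, by simpa using hy⟩) (c := ⟨z, by simpa using hzX⟩)
    (hc x y (Ne.symm hyx)) (hc y z (Ne.symm hzy)) (hc z x hzx) h

end Basics
end Helpers

section JoinLemmas
set_option linter.unusedSectionVars false
set_option linter.unusedVariables false
open SimpleGraph Sum

variable {V W : Type*} [Fintype V] [Fintype W] [DecidableEq V] [DecidableEq W]
  {G : SimpleGraph V} {H : SimpleGraph W}

lemma insert_inl_map (v : V) (A : Finset V) :
    insert (Sum.inl v) (A.map (Function.Embedding.inl : V ↪ V ⊕ W)) =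
      (insert v A).map .inl := by
  ext x; cases x <;> simp
lemma insert_inr_map (w : W) (B : Finset W) :
    insert (Sum.inr w) (B.map (Function.Embedding.inr : W ↪ V ⊕ W)) =
      (insert w B).map .inr := by
  ext x; cases x <;> simp

@[simp] lemma join_adj_inl_inl {u v : V} : (joinGraph G H).Adj (inl u) (inl v) ↔ G.Adj u v :=
  Iff.rfl
@[simp] lemma join_adj_inr_inr {u v : W} : (joinGraph G H).Adj (inr u) (inr v) ↔ H.Adj u v :=
  Iff.rfl
@[simp] lemma join_adj_inl_inr {u : V} {w : W} : (joinGraph G H).Adj (inl u) (inr w) :=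
  trivial
@[simp] lemma join_adj_inr_inl {u : V} {w : W} : (joinGraph G H).Adj (inr w) (inl u) :=
  trivial

/-- iso between induced subgraphs along an adjacency-preserving embedding -/
noncomputable def isoInduceMap {β γ : Type*} (Γ : SimpleGraph β) (Δ : SimpleGraph γ)
    (f : β ↪ γ) (hadj : ∀ a b, Δ.Adj (f a) (f b) ↔ Γ.Adj a b) (s : Set β) :
    Γ.induce s ≃g Δ.induce (f '' s) where
  toEquiv := Equiv.Set.image f s f.injective
  map_rel_iff' := by
    intro a b
    exact hadj a.1 b.1

lemma coe_map_inl (A : Finset V) :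
    ((A.map (Function.Embedding.inl : V ↪ V ⊕ W) : Finset (V ⊕ W)) : Set (V ⊕ W)) =
      Sum.inl '' (A : Set V) := by
  rw [Finset.coe_map]; rfl

lemma coe_map_inr (B : Finset W) :
    ((B.map (Function.Embedding.inr : W ↪ V ⊕ W) : Finset (V ⊕ W)) : Set (V ⊕ W)) =
      Sum.inr '' (B : Set W) := by
  rw [Finset.coe_map]; rfl

lemma forest_map_inl_iff (A : Finset V) :
    IsInducedForest (joinGraph G H) (A.map .inl) ↔ IsInducedForest G A := by
  unfold IsInducedForest
  rw [coe_map_inl]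
  have iso := isoInduceMap G (joinGraph G H) Function.Embedding.inl
    (fun a b => Iff.rfl) (A : Set V)
  exact ⟨fun h => acyclic_of_emb iso.toEmbedding h,
    fun h => acyclic_of_emb iso.symm.toEmbedding h⟩

lemma forest_map_inr_iff (B : Finset W) :
    IsInducedForest (joinGraph G H) (B.map .inr) ↔ IsInducedForest H B := by
  unfold IsInducedForest
  rw [coe_map_inr]
  have iso := isoInduceMap H (joinGraph G H) Function.Embedding.inr
    (fun a b => Iff.rfl) (B : Set W)
  exact ⟨fun h => acyclic_of_emb iso.toEmbedding h,
    fun h => acyclic_of_emb iso.symm.toEmbedding h⟩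

lemma indep_map_inl {A : Finset V} (h : IsIndepFinset G A) :
    IsIndepFinset (joinGraph G H) (A.map .inl) := by
  intro u hu v hv
  simp only [Finset.mem_map, Function.Embedding.inl_apply] at hu hv
  obtain ⟨a, ha, rfl⟩ := hu
  obtain ⟨b, hb, rfl⟩ := hv
  exact h ha hb

lemma indep_map_inr {B : Finset W} (h : IsIndepFinset H B) :
    IsIndepFinset (joinGraph G H) (B.map .inr) := by
  intro u hu v hv
  simp only [Finset.mem_map, Function.Embedding.inr_apply] at hu hv
  obtain ⟨a, ha, rfl⟩ := hu
  obtain ⟨b, hb, rfl⟩ := hv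
  exact h ha hb

lemma not_forest_triangle_l {X : Finset (V ⊕ W)} {u v : V} {w : W}
    (hu : inl u ∈ X) (hv : inl v ∈ X) (hw : inr w ∈ X) (huv : G.Adj u v) :
    ¬ IsInducedForest (joinGraph G H) X := by
  apply not_acyclic_of_triangle (a := (⟨inl u, by simpa using hu⟩ : ((X : Set _)) ))
    (b := ⟨inl v, by simpa using hv⟩) (c := ⟨inr w, by simpa using hw⟩)
  · exact huv
  · exact trivial
  · exact trivial

lemma not_forest_triangle_r {X : Finset (V ⊕ W)} {u v : W} {w : V}
    (hu : inr u ∈ X) (hv : inr v ∈ X) (hw : inl w ∈ X) (huv : H.Adj u v) :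
    ¬ IsInducedForest (joinGraph G H) X := by
  apply not_acyclic_of_triangle (a := (⟨inr u, by simpa using hu⟩ : ((X : Set _)) ))
    (b := ⟨inr v, by simpa using hv⟩) (c := ⟨inl w, by simpa using hw⟩)
  · exact huv
  · exact trivial
  · exact trivial

lemma not_forest_square {X : Finset (V ⊕ W)} {u v : V} {w x : W}
    (hu : inl u ∈ X) (hv : inl v ∈ X) (hw : inr w ∈ X) (hx : inr x ∈ X)
    (huv : u ≠ v) (hwx : w ≠ x) :
    ¬ IsInducedForest (joinGraph G H) X := by
  apply not_acyclic_of_square (a := (⟨inl u, by simpa using hu⟩ : ((X : Set _)) ))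
    (b := ⟨inr w, by simpa using hw⟩) (c := ⟨inl v, by simpa using hv⟩)
    (d := ⟨inr x, by simpa using hx⟩)
  · exact trivial
  · exact trivial
  · exact trivial
  · exact trivial
  · simp [Subtype.ext_iff, huv]
  · simp [Subtype.ext_iff, hwx]

lemma eq_map_inl_of_toRight_empty {X : Finset (V ⊕ W)} (h : X.toRight = ∅) :
    X = X.toLeft.map .inl := by
  ext x
  cases x with
  | inl a => simp
  | inr b =>
    simp only [Finset.mem_map, Function.Embedding.inl_apply, reduceCtorEq, and_false,
      exists_false, iff_false]
    intro hb
    have : b ∈ X.toRight := by simpa using hb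
    simp [h] at this

lemma eq_map_inr_of_toLeft_empty {X : Finset (V ⊕ W)} (h : X.toLeft = ∅) :
    X = X.toRight.map .inr := by
  ext x
  cases x with
  | inr b => simp
  | inl a =>
    simp only [Finset.mem_map, Function.Embedding.inr_apply, reduceCtorEq, and_false,
      exists_false, iff_false]
    intro hb
    have : a ∈ X.toLeft := by simpa using hb
    simp [h] at this

lemma eq_insert_of_toRight_singleton {X : Finset (V ⊕ W)} {w : W}
    (h : X.toRight = {w}) : X = insert (inr w) (X.toLeft.map .inl) := by
  ext x
  cases x with
  | inl a => simp
  | inr b =>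
    simp only [Finset.mem_insert, inr.injEq, Finset.mem_map, Function.Embedding.inl_apply,
      reduceCtorEq, and_false, exists_false, or_false]
    rw [show (inr b ∈ X) ↔ b ∈ X.toRight by simp, h, Finset.mem_singleton]

lemma eq_insert_of_toLeft_singleton {X : Finset (V ⊕ W)} {v : V}
    (h : X.toLeft = {v}) : X = insert (inl v) (X.toRight.map .inr) := by
  ext x
  cases x with
  | inr b => simp
  | inl a =>
    simp only [Finset.mem_insert, inl.injEq, Finset.mem_map, Function.Embedding.inr_apply,
      reduceCtorEq, and_false, exists_false, or_false]
    rw [show (inl a ∈ X) ↔ a ∈ X.toLeft by simp, h, Finset.mem_singleton]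

lemma card_insert_inr_map_inl (A : Finset V) (w : W) :
    (insert (inr w) (A.map (Function.Embedding.inl : V ↪ V ⊕ W))).card = A.card + 1 := by
  rw [Finset.card_insert_of_notMem (by simp), Finset.card_map]

lemma card_insert_inl_map_inr (B : Finset W) (v : V) :
    (insert (inl v) (B.map (Function.Embedding.inr : W ↪ V ⊕ W))).card = B.card + 1 := by
  rw [Finset.card_insert_of_notMem (by simp), Finset.card_map]

/-- (a') maximal induced forests of `G` give maximal induced forests of the join -/
lemma max_forest_map_inl (hGe : ∃ u v, G.Adj u v) {F : Finset V}
    (hF : IsMaximalInducedForest G F) :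
    IsMaximalInducedForest (joinGraph G H) (F.map .inl) := by
  rw [maximal_forest_iff_insert]
  refine ⟨(forest_map_inl_iff F).mpr hF.1, ?_⟩
  intro x hx hforest
  cases x with
  | inl v =>
    have hv : v ∉ F := by simpa using hx
    rw [insert_inl_map] at hforest
    exact (maximal_forest_iff_insert.mp hF).2 v hv ((forest_map_inl_iff _).mp hforest)
  | inr w =>
    obtain ⟨u, hu, v, hv, huv⟩ := not_indep_iff.mp (maximal_forest_not_indep hGe hF)
    exact not_forest_triangle_l (X := insert (inr w) (F.map .inl))
      (by simp [hu]) (by simp [hv]) (Finset.mem_insert_self _ _) huv hforest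

/-- (b') maximal induced forests of `H` give maximal induced forests of the join -/
lemma max_forest_map_inr (hHe : ∃ u v, H.Adj u v) {F : Finset W}
    (hF : IsMaximalInducedForest H F) :
    IsMaximalInducedForest (joinGraph G H) (F.map .inr) := by
  rw [maximal_forest_iff_insert]
  refine ⟨(forest_map_inr_iff F).mpr hF.1, ?_⟩
  intro x hx hforest
  cases x with
  | inr v =>
    have hv : v ∉ F := by simpa using hx
    rw [insert_inr_map] at hforest
    exact (maximal_forest_iff_insert.mp hF).2 v hv ((forest_map_inr_iff _).mp hforest)
  | inl w =>
    obtain ⟨u, hu, v, hv, huv⟩ := not_indep_iff.mp (maximal_forest_not_indep hHe hF)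
    exact not_forest_triangle_r (X := insert (inl w) (F.map .inr))
      (by simp [hu]) (by simp [hv]) (Finset.mem_insert_self _ _) huv hforest

/-- (c') maximal independent sets of `G` of size ≥ 2 plus a right vertex -/
lemma max_forest_insert_inr {A : Finset V} (hA : IsMaximalIndepSet G A)
    (h2 : 2 ≤ A.card) (w : W) :
    IsMaximalInducedForest (joinGraph G H) (insert (inr w) (A.map .inl)) := by
  rw [maximal_forest_iff_insert]
  refine ⟨forest_insert_of_indep (indep_map_inl hA.1) _, ?_⟩
  intro x hx hforest
  cases x with
  | inl v =>
    have hv : v ∉ A := by simpa using hx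
    have hind : IsIndepFinset G (insert v A) := by
      intro a ha b hb hab
      refine not_forest_triangle_l (X := insert (inl v) (insert (inr w) (A.map .inl)))
        ?_ ?_ (Finset.mem_insert_of_mem (Finset.mem_insert_self _ _)) hab hforest
      · rcases Finset.mem_insert.mp ha with rfl | ha <;> simp [ha]
      · rcases Finset.mem_insert.mp hb with rfl | hb <;> simp [hb]
    exact (maximal_indep_iff_insert.mp hA).2 v hv hind
  | inr x' =>
    have hxw : x' ≠ w := by
      intro rfl'; subst rfl'; simp at hx
    obtain ⟨u, hu, v, hv, huv⟩ := Finset.one_lt_card.mp (by omega : 1 < A.card)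
    exact not_forest_square (X := insert (inr x') (insert (inr w) (A.map .inl)))
      (show inl u ∈ _ by simp [hu]) (show inl v ∈ _ by simp [hv])
      (show inr w ∈ _ from Finset.mem_insert_of_mem (Finset.mem_insert_self _ _))
      (show inr x' ∈ _ from Finset.mem_insert_self _ _) huv (Ne.symm hxw) hforest

/-- (d') maximal independent sets of `H` of size ≥ 2 plus a left vertex -/
lemma max_forest_insert_inl {B : Finset W} (hB : IsMaximalIndepSet H B)
    (h2 : 2 ≤ B.card) (v : V) :
    IsMaximalInducedForest (joinGraph G H) (insert (inl v) (B.map .inr)) := by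
  rw [maximal_forest_iff_insert]
  refine ⟨forest_insert_of_indep (indep_map_inr hB.1) _, ?_⟩
  intro x hx hforest
  cases x with
  | inr u =>
    have hu : u ∉ B := by simpa using hx
    have hind : IsIndepFinset H (insert u B) := by
      intro a ha b hb hab
      refine not_forest_triangle_r (X := insert (inr u) (insert (inl v) (B.map .inr)))
        ?_ ?_ (Finset.mem_insert_of_mem (Finset.mem_insert_self _ _)) hab hforest
      · rcases Finset.mem_insert.mp ha with rfl | ha <;> simp [ha]
      · rcases Finset.mem_insert.mp hb with rfl | hb <;> simp [hb]
    exact (maximal_indep_iff_insert.mp hB).2 u hu hind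
  | inl v' =>
    have hvv : v' ≠ v := by
      intro rfl'; subst rfl'; simp at hx
    obtain ⟨u, hu, x, hx', hux⟩ := Finset.one_lt_card.mp (by omega : 1 < B.card)
    exact not_forest_square (X := insert (inl v') (insert (inl v) (B.map .inr)))
      (show inl v' ∈ _ from Finset.mem_insert_self _ _)
      (show inl v ∈ _ from Finset.mem_insert_of_mem (Finset.mem_insert_self _ _))
      (show inr u ∈ _ by simp [hu]) (show inr x ∈ _ by simp [hx']) hvv hux hforest

end JoinLemmas

section Classify
set_option linter.unusedSectionVars false
set_option linter.unusedVariables false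
open SimpleGraph Sum

variable {V W : Type*} [Fintype V] [Fintype W] [DecidableEq V] [DecidableEq W]
  {G : SimpleGraph V} {H : SimpleGraph W}

/-- classification of maximal induced forests of the join -/
lemma classify_max_forest {X : Finset (V ⊕ W)}
    (hX : IsMaximalInducedForest (joinGraph G H) X) :
    (X.toRight = ∅ ∧ IsMaximalInducedForest G X.toLeft) ∨
    (X.toLeft = ∅ ∧ IsMaximalInducedForest H X.toRight) ∨
    (X.toRight.card = 1 ∧ IsMaximalIndepSet G X.toLeft) ∨
    (X.toLeft.card = 1 ∧ 2 ≤ X.toRight.card ∧ IsMaximalIndepSet H X.toRight) := by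
  by_cases hB : X.toRight = ∅
  · left
    have hXeq := eq_map_inl_of_toRight_empty hB
    refine ⟨hB, maximal_forest_iff_insert.mpr
      ⟨(forest_map_inl_iff _).mp (by rw [← hXeq]; exact hX.1), ?_⟩⟩
    intro v hv hf
    refine (maximal_forest_iff_insert.mp hX).2 (inl v)
      (fun hmem => hv (Finset.mem_toLeft.mpr hmem)) ?_
    rw [hXeq, insert_inl_map]
    exact (forest_map_inl_iff _).mpr hf
  · by_cases hA : X.toLeft = ∅
    · right; left
      have hXeq := eq_map_inr_of_toLeft_empty hA
      refine ⟨hA, maximal_forest_iff_insert.mpr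
        ⟨(forest_map_inr_iff _).mp (by rw [← hXeq]; exact hX.1), ?_⟩⟩
      intro w hw hf
      refine (maximal_forest_iff_insert.mp hX).2 (inr w)
        (fun hmem => hw (Finset.mem_toRight.mpr hmem)) ?_
      rw [hXeq, insert_inr_map]
      exact (forest_map_inr_iff _).mpr hf
    · have hBne : X.toRight.Nonempty := Finset.nonempty_iff_ne_empty.mpr hB
      have hAne : X.toLeft.Nonempty := Finset.nonempty_iff_ne_empty.mpr hA
      rcases Nat.lt_or_ge X.toRight.card 2 with h2 | h2
      · have h1 : X.toRight.card = 1 := by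
          have := Finset.card_pos.mpr hBne; omega
        obtain ⟨w, hw⟩ := Finset.card_eq_one.mp h1
        have hwX : inr w ∈ X := Finset.mem_toRight.mp (hw ▸ Finset.mem_singleton_self w)
        have hind : IsIndepFinset G X.toLeft := by
          intro u hu v hv huv
          exact not_forest_triangle_l (Finset.mem_toLeft.mp hu) (Finset.mem_toLeft.mp hv)
            hwX huv hX.1
        right; right; left
        refine ⟨h1, maximal_indep_iff_insert.mpr ⟨hind, ?_⟩⟩
        intro v hv hins
        have hXeq := eq_insert_of_toRight_singleton hw
        refine (maximal_forest_iff_insert.mp hX).2 (inl v)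
          (fun hmem => hv (Finset.mem_toLeft.mpr hmem)) ?_
        rw [hXeq, Finset.insert_comm, insert_inl_map]
        exact forest_insert_of_indep (indep_map_inl hins) _
      · right; right; right
        have hA1 : X.toLeft.card = 1 := by
          by_contra hne
          have h2' : 2 ≤ X.toLeft.card := by
            have := Finset.card_pos.mpr hAne; omega
          obtain ⟨u, hu, v, hv, huv⟩ := Finset.one_lt_card.mp (by omega : 1 < X.toLeft.card)
          obtain ⟨w, hw, x, hx, hwx⟩ := Finset.one_lt_card.mp (by omega : 1 < X.toRight.card)
          exact not_forest_square (Finset.mem_toLeft.mp hu) (Finset.mem_toLeft.mp hv)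
            (Finset.mem_toRight.mp hw) (Finset.mem_toRight.mp hx) huv hwx hX.1
        obtain ⟨v, hv⟩ := Finset.card_eq_one.mp hA1
        have hvX : inl v ∈ X := Finset.mem_toLeft.mp (hv ▸ Finset.mem_singleton_self v)
        have hind : IsIndepFinset H X.toRight := by
          intro a ha b hb hab
          exact not_forest_triangle_r (Finset.mem_toRight.mp ha) (Finset.mem_toRight.mp hb)
            hvX hab hX.1
        refine ⟨hA1, h2, maximal_indep_iff_insert.mpr ⟨hind, ?_⟩⟩
        intro x hx hins
        have hXeq := eq_insert_of_toLeft_singleton hv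
        refine (maximal_forest_iff_insert.mp hX).2 (inr x)
          (fun hmem => hx (Finset.mem_toRight.mpr hmem)) ?_
        rw [hXeq, Finset.insert_comm, insert_inr_map]
        exact forest_insert_of_indep (indep_map_inr hins) _
end Classify

open Sum in
theorem stmt13 {V W : Type*} [Fintype V] [Fintype W] [DecidableEq V] [DecidableEq W]
    (G : SimpleGraph V) (H : SimpleGraph W)
    (hGe : ∃ u v, G.Adj u v) (hHe : ∃ u v, H.Adj u v)
    (hG1 : ¬ ∃ X : Finset V, IsMaximalIndepSet G X ∧ X.card = 1) :
    (WellFCovered (joinGraph G H) ↔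
      (WellFCovered G ∧ WellFCovered H) ∧
      (WellCovered G ∧ ∀ X Y : Finset W, IsMaximalIndepSet H X → IsMaximalIndepSet H Y →
        2 ≤ X.card → 2 ≤ Y.card → X.card = Y.card) ∧
      (forestNum G = forestNum H ∧ forestNum G = indepNum G + 1 ∧
        forestNum H = indepNum H + 1)) ∧
    (WellFCovered (joinGraph G H) →
      forestNum (joinGraph G H) = forestNum G ∧
        forestNum (joinGraph G H) = forestNum H) := by
  classical
  obtain ⟨v0, v0', hv0⟩ := hGe
  obtain ⟨w0, w0', hw0⟩ := hHe
  have hGe' : ∃ u v, G.Adj u v := ⟨v0, v0', hv0⟩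
  have hHe' : ∃ u v, H.Adj u v := ⟨w0, w0', hw0⟩
  have hemptyG : IsIndepFinset G (∅ : Finset V) := by intro u hu; simp at hu
  have hemptyH : IsIndepFinset H (∅ : Finset W) := by intro u hu; simp at hu
  obtain ⟨A0, -, hA0⟩ := exists_maximal_indep_ext G ∅ hemptyG
  have hA0c : 2 ≤ A0.card := two_le_card_maximal_indep hGe' hG1 hA0
  obtain ⟨F0, -, hF0⟩ := exists_maximal_forest_ext G ∅ (forest_of_indep hemptyG)
  obtain ⟨F1, -, hF1⟩ := exists_maximal_forest_ext H ∅ (forest_of_indep hemptyH)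
  have hiff : WellFCovered (joinGraph G H) ↔
      (WellFCovered G ∧ WellFCovered H) ∧
      (WellCovered G ∧ ∀ X Y : Finset W, IsMaximalIndepSet H X → IsMaximalIndepSet H Y →
        2 ≤ X.card → 2 ≤ Y.card → X.card = Y.card) ∧
      (forestNum G = forestNum H ∧ forestNum G = indepNum G + 1 ∧
        forestNum H = indepNum H + 1) := by
    constructor
    · -- forward direction
      intro hJ
      have hX0 : IsMaximalInducedForest (joinGraph G H) (insert (inr w0) (A0.map .inl)) :=
        max_forest_insert_inr hA0 hA0c w0
      have hX0card : (insert (inr w0) (A0.map (.inl : V ↪ V ⊕ W))).card = A0.card + 1 :=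
        card_insert_inr_map_inl A0 w0
      -- all maximal forests of G have card A0.card + 1
      have hfG : ∀ F : Finset V, IsMaximalInducedForest G F → F.card = A0.card + 1 := by
        intro F hF
        have := hJ _ _ (max_forest_map_inl hGe' hF) hX0
        rwa [Finset.card_map, hX0card] at this
      have hfH : ∀ F : Finset W, IsMaximalInducedForest H F → F.card = A0.card + 1 := by
        intro F hF
        have := hJ _ _ (max_forest_map_inr hHe' hF) hX0
        rwa [Finset.card_map, hX0card] at this
      have hiG : ∀ A : Finset V, IsMaximalIndepSet G A → A.card = A0.card := by
        intro A hA
        have := hJ _ _ (max_forest_insert_inr hA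
          (two_le_card_maximal_indep hGe' hG1 hA) w0) hX0
        rw [card_insert_inr_map_inl, hX0card] at this
        omega
      have hiH : ∀ B : Finset W, IsMaximalIndepSet H B → 2 ≤ B.card →
          B.card = A0.card := by
        intro B hB h2
        have := hJ _ _ (max_forest_insert_inl hB h2 v0) hX0
        rw [card_insert_inl_map_inr, hX0card] at this
        omega
      have hwfG : WellFCovered G := by
        intro F F' h h'; rw [hfG F h, hfG F' h']
      have hwfH : WellFCovered H := by
        intro F F' h h'; rw [hfH F h, hfH F' h']
      have hwcG : WellCovered G := by
        intro A A' h h'; rw [hiG A h, hiG A' h']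
      have hfnG : forestNum G = A0.card + 1 := by
        rw [forestNum_eq_of_wfc hwfG hF0, hfG F0 hF0]
      have hfnH : forestNum H = A0.card + 1 := by
        rw [forestNum_eq_of_wfc hwfH hF1, hfH F1 hF1]
      have hinG : indepNum G = A0.card := by
        rw [indepNum_eq_of_wc hwcG hA0]
      -- H has a maximal independent set of size ≥ 2
      obtain ⟨XH, hXHf, hXHc⟩ := exists_forest_card_forestNum H
      obtain ⟨x, y, hxy, hnadj⟩ := nonadj_pair_of_forest_card_three hXHf (by omega)
      have hpair : IsIndepFinset H ({x, y} : Finset W) := by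
        intro a ha b hb hab
        simp only [Finset.mem_insert, Finset.mem_singleton] at ha hb
        rcases ha with rfl | rfl <;> rcases hb with rfl | rfl
        · exact H.irrefl hab
        · exact hnadj hab
        · exact hnadj hab.symm
        · exact H.irrefl hab
      have hinH : indepNum H = A0.card := by
        obtain ⟨M, hsub, hM⟩ := exists_maximal_indep_ext H _ hpair
        have hMc : 2 ≤ M.card := by
          refine le_trans ?_ (Finset.card_le_card hsub)
          rw [Finset.card_insert_of_notMem (by simpa using hxy), Finset.card_singleton]
        have hM2 := hiH M hM hMc
        obtain ⟨Ms, hMsi, hMsc⟩ := exists_indep_card_indepNum H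
        obtain ⟨Y, hsubY, hY⟩ := exists_maximal_indep_ext H _ hMsi
        have hYc : Y.card = indepNum H :=
          le_antisymm (le_indepNum hY.1) (hMsc ▸ Finset.card_le_card hsubY)
        have h2Y : 2 ≤ Y.card := by
          have := le_indepNum hM.1
          omega
        have := hiH Y hY h2Y
        omega
      refine ⟨⟨hwfG, hwfH⟩, ⟨hwcG, ?_⟩, ?_, ?_, ?_⟩
      · intro X Y hX hY h2X h2Y
        rw [hiH X hX h2X, hiH Y hY h2Y]
      · rw [hfnG, hfnH]
      · rw [hfnG, hinG]
      · rw [hfnH, hinH]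
    · -- backward direction
      rintro ⟨⟨hwfG, hwfH⟩, ⟨hwcG, hH2⟩, hGH, hfaG, hfaH⟩
      have hinG2 : 2 ≤ indepNum G := by
        rw [indepNum_eq_of_wc hwcG hA0]; exact hA0c
      have hinHG : indepNum H = indepNum G := by omega
      -- a maximal independent set of H of full size
      obtain ⟨Ms, hMsi, hMsc⟩ := exists_indep_card_indepNum H
      obtain ⟨Y0, hsubY0, hY0⟩ := exists_maximal_indep_ext H _ hMsi
      have hY0c : Y0.card = indepNum H :=
        le_antisymm (le_indepNum hY0.1) (hMsc ▸ Finset.card_le_card hsubY0)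
      have hIh : ∀ B : Finset W, IsMaximalIndepSet H B → 2 ≤ B.card →
          B.card = indepNum H := by
        intro B hB h2
        rw [hH2 B Y0 hB hY0 h2 (by omega), hY0c]
      -- every maximal forest of the join has card forestNum G
      have hcard : ∀ Z : Finset (V ⊕ W), IsMaximalInducedForest (joinGraph G H) Z →
          Z.card = forestNum G := by
        intro Z hZ
        have hZc := Finset.card_toLeft_add_card_toRight (u := Z)
        rcases classify_max_forest hZ with ⟨hB, hL⟩ | ⟨hA, hR⟩ | ⟨h1, hL⟩ | ⟨h1, h2, hR⟩
        · have : Z.toRight.card = 0 := by rw [hB]; simp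
          have hF := forestNum_eq_of_wfc hwfG hL
          omega
        · have : Z.toLeft.card = 0 := by rw [hA]; simp
          have hF := forestNum_eq_of_wfc hwfH hR
          omega
        · have hI := indepNum_eq_of_wc hwcG hL
          omega
        · have hI := hIh _ hR h2
          omega
      intro X Y hX hY
      rw [hcard X hX, hcard Y hY]
  refine ⟨hiff, ?_⟩
  intro hJ
  obtain ⟨⟨hwfG, hwfH⟩, -, hGH, -, -⟩ := hiff.mp hJ
  have h1 : forestNum (joinGraph G H) = F0.card := by
    rw [forestNum_eq_of_wfc hJ (max_forest_map_inl hGe' hF0), Finset.card_map]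
  have h2 : forestNum G = F0.card := forestNum_eq_of_wfc hwfG hF0
  exact ⟨h1.trans h2.symm, (h1.trans h2.symm).trans hGH⟩
end

section
/- Let G and H be finite simple graphs on disjoint vertex sets, each having at least one vertex, and suppose each of G and H has a maximal independent set of cardinality 1. Then the join G ∨ H is well-f-covered if and only if both G and H are complete graphs. -/
open SimpleGraph

/-- A graph on at most two vertices is acyclic. -/
lemma acyclic_of_card_le_two {α : Type*} [Fintype α] (G : SimpleGraph α)
    (h : Fintype.card α ≤ 2) : G.IsAcyclic := by
  intro v c hc
  have h3 := hc.three_le_length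
  have hn : c.support.tail.Nodup := hc.2
  have hle := hn.length_le_card
  have hlen : c.support.tail.length = c.length := by
    have := c.length_support
    simp [List.length_tail, this]
  omega

lemma forest_of_card_le_two {α : Type*} (G : SimpleGraph α) (X : Finset α)
    (h : X.card ≤ 2) : IsInducedForest G X := by
  classical
  apply acyclic_of_card_le_two
  simpa using h

lemma not_forest_of_triangle {α : Type*} (G : SimpleGraph α) (X : Finset α) {a b c : α}
    (ha : a ∈ X) (hb : b ∈ X) (hc : c ∈ X)
    (hab : G.Adj a b) (hbc : G.Adj b c) (hca : G.Adj c a) :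
    ¬ IsInducedForest G X := by
  intro hF
  have hA : a ∈ (X : Set α) := ha
  have hB : b ∈ (X : Set α) := hb
  have hC : c ∈ (X : Set α) := hc
  have hAB : (G.induce (X : Set α)).Adj ⟨a, hA⟩ ⟨b, hB⟩ := hab
  have hBC : (G.induce (X : Set α)).Adj ⟨b, hB⟩ ⟨c, hC⟩ := hbc
  have hCA : (G.induce (X : Set α)).Adj ⟨c, hC⟩ ⟨a, hA⟩ := hca
  have hab' := hab.ne
  have hbc' := hbc.ne
  have hca' := hca.ne
  exact hF (Walk.cons hAB (Walk.cons hBC (Walk.cons hCA Walk.nil)))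
    (by simp [Walk.isCycle_def, Walk.isTrail_def, Sym2.eq_iff, Subtype.ext_iff]; aesop)

lemma no_reach_of_isolated {α : Type*} {G : SimpleGraph α} {u v : α}
    (h : ∀ x, ¬ G.Adj u x) (hne : u ≠ v) : ¬ G.Reachable u v := by
  rintro ⟨p⟩
  cases p with
  | nil => exact hne rfl
  | cons h' _ => exact h _ h'

/-- If every edge goes through `w`, the graph is acyclic. -/
lemma acyclic_of_all_edges_through {α : Type*} (G : SimpleGraph α) (w : α)
    (h : ∀ a b, G.Adj a b → a = w ∨ b = w) : G.IsAcyclic := by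
  rw [isAcyclic_iff_forall_adj_isBridge]
  intro u v huv
  rw [isBridge_iff]
  rcases h u v huv with rfl | rfl
  · refine fun hr => no_reach_of_isolated (G := G \ fromEdgeSet {s(u, v)}) (u := v)
      ?_ huv.ne' hr.symm
    intro x hx
    rw [sdiff_adj] at hx
    obtain ⟨hx1, hx2⟩ := hx
    rcases h v x hx1 with rfl | rfl
    · exact huv.ne' rfl
    · exact hx2 (by simp [Sym2.eq_iff]; exact hx1.ne)
  · refine fun hr => no_reach_of_isolated (G := G \ fromEdgeSet {s(u, v)}) (u := u)
      ?_ huv.ne hr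
    intro x hx
    rw [sdiff_adj] at hx
    obtain ⟨hx1, hx2⟩ := hx
    rcases h u x hx1 with rfl | rfl
    · exact huv.ne rfl
    · exact hx2 (by simp [Sym2.eq_iff]; exact hx1.ne)

lemma exists_maximal_forest {α : Type*} [Fintype α] [DecidableEq α] (G : SimpleGraph α)
    (X : Finset α) (hX : IsInducedForest G X) :
    ∃ Y, X ⊆ Y ∧ IsMaximalInducedForest G Y := by
  classical
  let S : Finset (Finset α) := Finset.univ.filter fun Y => X ⊆ Y ∧ IsInducedForest G Y
  have hne : S.Nonempty := ⟨X, by simp [S, hX]⟩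
  obtain ⟨Y, hYS, hmax⟩ := Finset.exists_max_image S Finset.card hne
  simp only [S, Finset.mem_filter, Finset.mem_univ, true_and] at hYS
  refine ⟨Y, hYS.1, hYS.2, ?_⟩
  intro Z hZ hZF
  have hZS : Z ∈ S := by
    simp only [S, Finset.mem_filter, Finset.mem_univ, true_and]
    exact ⟨hYS.1.trans hZ.subset, hZF⟩
  exact absurd (Finset.card_lt_card hZ) (not_lt.mpr (hmax Z hZS))

lemma two_le_card_of_maximal_forest {α : Type*} [Fintype α] [DecidableEq α]
    (G : SimpleGraph α) {X : Finset α} (hX : IsMaximalInducedForest G X)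
    (hcard : 2 ≤ Fintype.card α) : 2 ≤ X.card := by
  by_contra hlt
  push_neg at hlt
  have hne : X ≠ Finset.univ := by
    intro h; rw [h, Finset.card_univ] at hlt; omega
  obtain ⟨c, -, hc⟩ := Finset.exists_of_ssubset (Finset.ssubset_univ_iff.mpr hne)
  exact hX.2 (insert c X) (Finset.ssubset_insert hc)
    (forest_of_card_le_two _ _ (by rw [Finset.card_insert_of_notMem hc]; omega))

lemma exists_three {α : Type*} [DecidableEq α] {X : Finset α} (h : 3 ≤ X.card) :
    ∃ a b c, a ∈ X ∧ b ∈ X ∧ c ∈ X ∧ a ≠ b ∧ a ≠ c ∧ b ≠ c := by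
  obtain ⟨a, ha⟩ := (Finset.card_pos (s := X)).mp (by omega)
  obtain ⟨b, hb⟩ := (Finset.card_pos (s := X.erase a)).mp (by rw [Finset.card_erase_of_mem ha]; omega)
  obtain ⟨c, hc⟩ := (Finset.card_pos (s := (X.erase a).erase b)).mp (by rw [Finset.card_erase_of_mem hb, Finset.card_erase_of_mem ha]; omega)
  simp only [Finset.mem_erase] at hb hc
  exact ⟨a, b, c, ha, hb.2, hc.2.2, Ne.symm hb.1, Ne.symm hc.2.1, Ne.symm hc.1⟩

lemma dominating_of_maximal_indep_one {α : Type*} [DecidableEq α] (G : SimpleGraph α)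
    (h : ∃ X : Finset α, IsMaximalIndepSet G X ∧ X.card = 1) :
    ∃ g : α, ∀ a, a ≠ g → G.Adj g a := by
  obtain ⟨X, ⟨-, hmax⟩, hcard⟩ := h
  obtain ⟨g, rfl⟩ := Finset.card_eq_one.mp hcard
  refine ⟨g, fun a hag => ?_⟩
  by_contra hadj
  apply hmax (insert a {g}) (Finset.ssubset_insert (by simp [hag]))
  intro u hu v hv huv
  simp only [Finset.mem_insert, Finset.mem_singleton] at hu hv
  rcases hu with rfl | rfl <;> rcases hv with rfl | rfl
  · exact G.irrefl huv
  · exact hadj huv.symm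
  · exact hadj huv
  · exact G.irrefl huv

lemma exists_nonadj {α : Type*} {G : SimpleGraph α} (h : G ≠ ⊤) :
    ∃ u v, u ≠ v ∧ ¬ G.Adj u v := by
  by_contra hc
  push_neg at hc
  apply h
  ext u v
  simp only [top_adj]
  exact ⟨fun h' => h'.ne, fun h' => hc u v h'⟩

/-- Let `G` and `H` be graphs on nonempty disjoint vertex sets, each
having a maximal independent set of cardinality 1. Then the join `G ∨ H` is
well-f-covered iff both `G` and `H` are complete graphs. -/
theorem stmt14 {V W : Type*} [Fintype V] [Fintype W] [DecidableEq V] [DecidableEq W]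
    [Nonempty V] [Nonempty W] (G : SimpleGraph V) (H : SimpleGraph W)
    (hG : ∃ X : Finset V, IsMaximalIndepSet G X ∧ X.card = 1)
    (hH : ∃ X : Finset W, IsMaximalIndepSet H X ∧ X.card = 1) :
    WellFCovered (joinGraph G H) ↔ (G = ⊤ ∧ H = ⊤) := by
  classical
  have hcard2 : 2 ≤ Fintype.card (V ⊕ W) := by
    rw [Fintype.card_sum]
    have h1 := Fintype.card_pos (α := V)
    have h2 := Fintype.card_pos (α := W)
    omega
  constructor
  · intro hwf
    obtain ⟨g, hg⟩ := dominating_of_maximal_indep_one G hG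
    obtain ⟨h', hh⟩ := dominating_of_maximal_indep_one H hH
    -- The pair {inl g, inr h'} is a maximal induced forest of cardinality 2.
    have hY0card : ({Sum.inl g, Sum.inr h'} : Finset (V ⊕ W)).card = 2 := by
      rw [Finset.card_insert_of_notMem (by simp), Finset.card_singleton]
    have hY0 : IsMaximalInducedForest (joinGraph G H) {Sum.inl g, Sum.inr h'} := by
      refine ⟨forest_of_card_le_two _ _ (le_of_eq hY0card), ?_⟩
      intro Z hZ hZF
      obtain ⟨x, hxZ, hxY⟩ := Finset.exists_of_ssubset hZ
      simp only [Finset.mem_insert, Finset.mem_singleton, not_or] at hxY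
      have hgZ : Sum.inl g ∈ Z := hZ.subset (by simp)
      have hhZ : Sum.inr h' ∈ Z := hZ.subset (by simp)
      have hx_g : (joinGraph G H).Adj x (Sum.inl g) := by
        cases x with
        | inl a =>
          have hne : a ≠ g := fun h => hxY.1 (by rw [h])
          exact (hg a hne).symm
        | inr b => trivial
      have hg_h : (joinGraph G H).Adj (Sum.inl g) (Sum.inr h') := trivial
      have hh_x : (joinGraph G H).Adj (Sum.inr h') x := by
        cases x with
        | inl a => trivial
        | inr b =>
          have hne : b ≠ h' := fun h => hxY.2 (by rw [h])
          exact hh b hne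
      exact not_forest_of_triangle (joinGraph G H) Z hxZ hgZ hhZ hx_g hg_h hh_x hZF
    by_contra hcon
    rw [not_and_or] at hcon
    rcases hcon with hGne | hHne
    · obtain ⟨u, v, huv, hnadj⟩ := exists_nonadj hGne
      have hvu : ¬ G.Adj v u := fun h => hnadj h.symm
      obtain ⟨w0⟩ := (inferInstance : Nonempty W)
      set F0 : Finset (V ⊕ W) := {Sum.inl u, Sum.inl v, Sum.inr w0} with hF0def
      have hF0card : F0.card = 3 := by
        rw [hF0def, Finset.card_insert_of_notMem (by simp [huv]),
          Finset.card_insert_of_notMem (by simp), Finset.card_singleton]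
      have hwF0 : (Sum.inr w0 : V ⊕ W) ∈ (F0 : Set (V ⊕ W)) := by simp [hF0def]
      have hF0 : IsInducedForest (joinGraph G H) F0 := by
        apply acyclic_of_all_edges_through _ (⟨Sum.inr w0, hwF0⟩ : (F0 : Set (V ⊕ W)))
        rintro ⟨A, hA⟩ ⟨B, hB⟩ hadj
        have hadj' : (joinGraph G H).Adj A B := hadj
        simp only [hF0def, Finset.coe_insert, Set.mem_insert_iff, Finset.coe_singleton,
          Set.mem_singleton_iff] at hA hB
        have key : A = Sum.inr w0 ∨ B = Sum.inr w0 := by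
          rcases hA with rfl | rfl | rfl
          · rcases hB with rfl | rfl | rfl
            · exact absurd hadj' ((joinGraph G H).irrefl)
            · exact absurd hadj' hnadj
            · exact Or.inr rfl
          · rcases hB with rfl | rfl | rfl
            · exact absurd hadj' hvu
            · exact absurd hadj' ((joinGraph G H).irrefl)
            · exact Or.inr rfl
          · exact Or.inl rfl
        rcases key with h | h
        · exact Or.inl (Subtype.ext h)
        · exact Or.inr (Subtype.ext h)
      obtain ⟨Z, hsub, hZmax⟩ := exists_maximal_forest (joinGraph G H) F0 hF0
      have h3 : 3 ≤ Z.card := hF0card ▸ Finset.card_le_card hsub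
      have heq := hwf Z _ hZmax hY0
      rw [hY0card] at heq
      omega
    · obtain ⟨u, v, huv, hnadj⟩ := exists_nonadj hHne
      have hvu : ¬ H.Adj v u := fun h => hnadj h.symm
      obtain ⟨v0⟩ := (inferInstance : Nonempty V)
      set F0 : Finset (V ⊕ W) := {Sum.inr u, Sum.inr v, Sum.inl v0} with hF0def
      have hF0card : F0.card = 3 := by
        rw [hF0def, Finset.card_insert_of_notMem (by simp [huv]),
          Finset.card_insert_of_notMem (by simp), Finset.card_singleton]
      have hwF0 : (Sum.inl v0 : V ⊕ W) ∈ (F0 : Set (V ⊕ W)) := by simp [hF0def]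
      have hF0 : IsInducedForest (joinGraph G H) F0 := by
        apply acyclic_of_all_edges_through _ (⟨Sum.inl v0, hwF0⟩ : (F0 : Set (V ⊕ W)))
        rintro ⟨A, hA⟩ ⟨B, hB⟩ hadj
        have hadj' : (joinGraph G H).Adj A B := hadj
        simp only [hF0def, Finset.coe_insert, Set.mem_insert_iff, Finset.coe_singleton,
          Set.mem_singleton_iff] at hA hB
        have key : A = Sum.inl v0 ∨ B = Sum.inl v0 := by
          rcases hA with rfl | rfl | rfl
          · rcases hB with rfl | rfl | rfl
            · exact absurd hadj' ((joinGraph G H).irrefl)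
            · exact absurd hadj' hnadj
            · exact Or.inr rfl
          · rcases hB with rfl | rfl | rfl
            · exact absurd hadj' hvu
            · exact absurd hadj' ((joinGraph G H).irrefl)
            · exact Or.inr rfl
          · exact Or.inl rfl
        rcases key with h | h
        · exact Or.inl (Subtype.ext h)
        · exact Or.inr (Subtype.ext h)
      obtain ⟨Z, hsub, hZmax⟩ := exists_maximal_forest (joinGraph G H) F0 hF0
      have h3 : 3 ≤ Z.card := hF0card ▸ Finset.card_le_card hsub
      have heq := hwf Z _ hZmax hY0
      rw [hY0card] at heq
      omega
  · rintro ⟨rfl, rfl⟩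
    have hcomp : ∀ x y : V ⊕ W, x ≠ y → (joinGraph (⊤ : SimpleGraph V) (⊤ : SimpleGraph W)).Adj x y := by
      rintro (x | x) (y | y) hxy
      · exact fun h => hxy (by rw [h])
      · trivial
      · trivial
      · exact fun h => hxy (by rw [h])
    have key : ∀ Z : Finset (V ⊕ W),
        IsMaximalInducedForest (joinGraph (⊤ : SimpleGraph V) (⊤ : SimpleGraph W)) Z →
        Z.card = 2 := by
      intro Z hZ
      have h2 := two_le_card_of_maximal_forest _ hZ hcard2
      by_contra hne
      have h3 : 3 ≤ Z.card := by omega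
      obtain ⟨a, b, c, haZ, hbZ, hcZ, hab, hac, hbc⟩ := exists_three h3
      exact not_forest_of_triangle _ Z haZ hbZ hcZ (hcomp a b hab) (hcomp b c hbc)
        (hcomp c a (Ne.symm hac)) hZ.1
    intro X Y hX hY
    rw [key X hX, key Y hY]
end

section
/- Let G and H be edgeless finite simple graphs on disjoint vertex sets of cardinalities n₁ ≥ 1 and n₂ ≥ 1, respectively. Then the join G ∨ H is well-f-covered if and only if n₁ = n₂ or n₁ = 1 or n₂ = 1. -/
section Aux

open SimpleGraph Sum

lemma join_adj {V W : Type*} {a b : V ⊕ W} :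
    (joinGraph (⊥ : SimpleGraph V) (⊥ : SimpleGraph W)).Adj a b ↔
      ((∃ x y, a = inl x ∧ b = inr y) ∨ (∃ x y, a = inr x ∧ b = inl y)) := by
  cases a <;> cases b <;> simp [joinGraph]

lemma star_no_cycle {α : Type*} {G : SimpleGraph α} {x0 : α}
    (h : ∀ a b, G.Adj a b → a = x0 ∨ b = x0)
    (c : G.Walk x0 x0) : ¬ c.IsCycle := by
  intro hc
  obtain ⟨y, hadj, p, rfl⟩ := SimpleGraph.Walk.not_nil_iff.mp hc.not_nil
  have h3 := hc.three_le_length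
  rw [SimpleGraph.Walk.cons_isCycle_iff] at hc
  have hyx : y ≠ x0 := fun he => G.irrefl (he ▸ hadj)
  have hpnil : ¬ p.Nil := by
    intro hn
    rw [SimpleGraph.Walk.nil_iff_length_eq] at hn
    simp [SimpleGraph.Walk.length_cons, hn] at h3
  obtain ⟨z, hadj2, q, rfl⟩ := SimpleGraph.Walk.not_nil_iff.mp hpnil
  have hz : z = x0 := by
    rcases h _ _ hadj2 with rfl | rfl
    · exact absurd rfl hyx
    · rfl
  subst hz
  have hqnil : ¬ q.Nil := by
    intro hn
    rw [SimpleGraph.Walk.nil_iff_length_eq] at hn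
    simp [SimpleGraph.Walk.length_cons, hn] at h3
  obtain ⟨w', hadj3, r, rfl⟩ := SimpleGraph.Walk.not_nil_iff.mp hqnil
  have hpath := hc.1
  rw [SimpleGraph.Walk.isPath_def] at hpath
  simp only [SimpleGraph.Walk.support_cons, List.nodup_cons] at hpath
  exact hpath.2.1 (by simp [SimpleGraph.Walk.support_cons,
    SimpleGraph.Walk.end_mem_support r])

lemma acyclic_of_star {α : Type*} {G : SimpleGraph α} (x0 : α)
    (h : ∀ a b, G.Adj a b → a = x0 ∨ b = x0) : G.IsAcyclic := by
  classical
  intro v c hc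
  have hx : x0 ∈ c.support := by
    obtain ⟨y, hadj, p, rfl⟩ := SimpleGraph.Walk.not_nil_iff.mp hc.not_nil
    rcases h _ _ hadj with rfl | rfl
    · exact SimpleGraph.Walk.start_mem_support _
    · simp [SimpleGraph.Walk.support_cons]
  exact star_no_cycle h (c.rotate x0 hx) (hc.rotate hx)

lemma acyclic_of_no_edges {α : Type*} {G : SimpleGraph α}
    (h : ∀ a b, ¬ G.Adj a b) : G.IsAcyclic := by
  intro v c hc
  obtain ⟨y, hadj, p, rfl⟩ := SimpleGraph.Walk.not_nil_iff.mp hc.not_nil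
  exact h _ _ hadj

lemma join_forest_iff {V W : Type*} (X : Finset (V ⊕ W)) :
    IsInducedForest (joinGraph (⊥ : SimpleGraph V) (⊥ : SimpleGraph W)) X ↔
      X.toLeft.card ≤ 1 ∨ X.toRight.card ≤ 1 := by
  set J := joinGraph (⊥ : SimpleGraph V) (⊥ : SimpleGraph W) with hJ
  constructor
  · intro hac
    by_contra hcon
    push_neg at hcon
    obtain ⟨hL, hR⟩ := hcon
    obtain ⟨a1, ha1, a2, ha2, ha⟩ := Finset.one_lt_card.mp hL
    obtain ⟨b1, hb1, b2, hb2, hb⟩ := Finset.one_lt_card.mp hR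
    rw [Finset.mem_toLeft] at ha1 ha2
    rw [Finset.mem_toRight] at hb1 hb2
    rw [IsInducedForest, SimpleGraph.isAcyclic_iff_path_unique] at hac
    let G' := J.induce (X : Set (V ⊕ W))
    let A1 : (X : Set (V ⊕ W)) := ⟨inl a1, ha1⟩
    let A2 : (X : Set (V ⊕ W)) := ⟨inl a2, ha2⟩
    let B1 : (X : Set (V ⊕ W)) := ⟨inr b1, hb1⟩
    let B2 : (X : Set (V ⊕ W)) := ⟨inr b2, hb2⟩
    have e11 : G'.Adj A1 B1 := by trivial
    have e12 : G'.Adj B1 A2 := by trivial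
    have e21 : G'.Adj A1 B2 := by trivial
    have e22 : G'.Adj B2 A2 := by trivial
    let p1 : G'.Walk A1 A2 := Walk.cons e11 (Walk.cons e12 Walk.nil)
    let p2 : G'.Walk A1 A2 := Walk.cons e21 (Walk.cons e22 Walk.nil)
    have hp1 : p1.IsPath := by
      simp only [p1, Walk.isPath_def, Walk.support_cons, Walk.support_nil,
        List.nodup_cons, List.mem_cons, List.not_mem_nil, or_false, List.mem_singleton]
      refine ⟨?_, ?_, by simp⟩
      · rintro (h | h) <;> simp only [A1, A2, B1, Subtype.mk.injEq] at h <;> simp_all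
      · rintro h; simp only [A2, B1, Subtype.mk.injEq] at h; simp_all
    have hp2 : p2.IsPath := by
      simp only [p2, Walk.isPath_def, Walk.support_cons, Walk.support_nil,
        List.nodup_cons, List.mem_cons, List.not_mem_nil, or_false, List.mem_singleton]
      refine ⟨?_, ?_, by simp⟩
      · rintro (h | h) <;> simp only [A1, A2, B2, Subtype.mk.injEq] at h <;> simp_all
      · rintro h; simp only [A2, B2, Subtype.mk.injEq] at h; simp_all
    have := hac ⟨p1, hp1⟩ ⟨p2, hp2⟩
    have hw : p1 = p2 := congrArg Subtype.val this
    have hs := congrArg SimpleGraph.Walk.support hw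
    simp only [p1, p2, Walk.support_cons, Walk.support_nil] at hs
    simp only [List.cons.injEq] at hs
    exact hb (by simpa [B1, B2, Subtype.ext_iff] using hs.2.1)
  · intro h
    rcases h with hA | hB
    · rcases Finset.eq_empty_or_nonempty X.toLeft with he | ⟨a0, ha0⟩
      · apply acyclic_of_no_edges
        rintro ⟨u, hu⟩ ⟨v, hv⟩ hadj
        rcases join_adj.mp hadj with ⟨x, y, hx, hy⟩ | ⟨x, y, hx, hy⟩
        · subst hx
          have : x ∈ X.toLeft := Finset.mem_toLeft.mpr hu
          simp [he] at this
        · subst hy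
          have : y ∈ X.toLeft := Finset.mem_toLeft.mpr hv
          simp [he] at this
      · rw [Finset.mem_toLeft] at ha0
        apply acyclic_of_star (⟨inl a0, ha0⟩ : (X : Set (V ⊕ W)))
        rintro ⟨u, hu⟩ ⟨v, hv⟩ hadj
        rcases join_adj.mp hadj with ⟨x, y, hx, hy⟩ | ⟨x, y, hx, hy⟩
        · left
          apply Subtype.ext
          subst hx
          have hx' : x ∈ X.toLeft := Finset.mem_toLeft.mpr hu
          have : x = a0 := Finset.card_le_one.mp hA x hx' a0 (Finset.mem_toLeft.mpr ha0)
          simp [this]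
        · right
          apply Subtype.ext
          subst hy
          have hy' : y ∈ X.toLeft := Finset.mem_toLeft.mpr hv
          have : y = a0 := Finset.card_le_one.mp hA y hy' a0 (Finset.mem_toLeft.mpr ha0)
          simp [this]
    · rcases Finset.eq_empty_or_nonempty X.toRight with he | ⟨b0, hb0⟩
      · apply acyclic_of_no_edges
        rintro ⟨u, hu⟩ ⟨v, hv⟩ hadj
        rcases join_adj.mp hadj with ⟨x, y, hx, hy⟩ | ⟨x, y, hx, hy⟩
        · subst hy
          have : y ∈ X.toRight := Finset.mem_toRight.mpr hv
          simp [he] at this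
        · subst hx
          have : x ∈ X.toRight := Finset.mem_toRight.mpr hu
          simp [he] at this
      · rw [Finset.mem_toRight] at hb0
        apply acyclic_of_star (⟨inr b0, hb0⟩ : (X : Set (V ⊕ W)))
        rintro ⟨u, hu⟩ ⟨v, hv⟩ hadj
        rcases join_adj.mp hadj with ⟨x, y, hx, hy⟩ | ⟨x, y, hx, hy⟩
        · right
          apply Subtype.ext
          subst hy
          have hy' : y ∈ X.toRight := Finset.mem_toRight.mpr hv
          have : y = b0 := Finset.card_le_one.mp hB y hy' b0 (Finset.mem_toRight.mpr hb0)
          simp [this]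
        · left
          apply Subtype.ext
          subst hx
          have hx' : x ∈ X.toRight := Finset.mem_toRight.mpr hu
          have : x = b0 := Finset.card_le_one.mp hB x hx' b0 (Finset.mem_toRight.mpr hb0)
          simp [this]

lemma join_maximal_card {V W : Type*} [Fintype V] [Fintype W] [Nonempty V] [Nonempty W]
    (X : Finset (V ⊕ W))
    (hmax : IsMaximalInducedForest (joinGraph (⊥ : SimpleGraph V) (⊥ : SimpleGraph W)) X) :
    (X.toLeft = Finset.univ ∧ X.toRight.card = 1) ∨
    (X.toRight = Finset.univ ∧ X.toLeft.card = 1) := by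
  classical
  rcases (join_forest_iff X).mp hmax.1 with hA | hB
  · right
    constructor
    · by_contra hne
      obtain ⟨w, hw⟩ : ∃ w, w ∉ X.toRight := by
        by_contra hall; push_neg at hall
        exact hne (Finset.eq_univ_iff_forall.mpr hall)
      refine hmax.2 (insert (Sum.inr w) X)
        (Finset.ssubset_insert (by simpa using hw)) ?_
      exact (join_forest_iff _).mpr (Or.inl (by simpa using hA))
    · rcases Finset.eq_empty_or_nonempty X.toLeft with he | hne
      · exfalso
        obtain ⟨v⟩ := ‹Nonempty V›
        have hv : inl v ∉ X := fun h => by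
          simpa [he] using Finset.mem_toLeft.mpr h
        refine hmax.2 (insert (Sum.inl v) X) (Finset.ssubset_insert hv) ?_
        refine (join_forest_iff _).mpr (Or.inl ?_)
        simp [he]
      · have := Finset.card_pos.mpr hne; omega
  · left
    constructor
    · by_contra hne
      obtain ⟨v, hv⟩ : ∃ v, v ∉ X.toLeft := by
        by_contra hall; push_neg at hall
        exact hne (Finset.eq_univ_iff_forall.mpr hall)
      refine hmax.2 (insert (Sum.inl v) X)
        (Finset.ssubset_insert (by simpa using hv)) ?_
      exact (join_forest_iff _).mpr (Or.inr (by simpa using hB))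
    · rcases Finset.eq_empty_or_nonempty X.toRight with he | hne
      · exfalso
        obtain ⟨w⟩ := ‹Nonempty W›
        have hw : inr w ∉ X := fun h => by
          simpa [he] using Finset.mem_toRight.mpr h
        refine hmax.2 (insert (Sum.inr w) X) (Finset.ssubset_insert hw) ?_
        refine (join_forest_iff _).mpr (Or.inr ?_)
        simp [he]
      · have := Finset.card_pos.mpr hne; omega

end Aux

/-- Let `G` and `H` be edgeless graphs on disjoint vertex sets of
cardinalities `n₁ ≥ 1` and `n₂ ≥ 1`. Then the join `G ∨ H` is well-f-covered iff
`n₁ = n₂` or `n₁ = 1` or `n₂ = 1`. -/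
theorem stmt18 {V W : Type*} [Fintype V] [Fintype W] (n₁ n₂ : ℕ)
    (h1 : 1 ≤ n₁) (h2 : 1 ≤ n₂) (hV : Fintype.card V = n₁) (hW : Fintype.card W = n₂) :
    WellFCovered (joinGraph (⊥ : SimpleGraph V) (⊥ : SimpleGraph W)) ↔
      (n₁ = n₂ ∨ n₁ = 1 ∨ n₂ = 1) := by
  classical
  have hNV : Nonempty V := Fintype.card_pos_iff.mp (by omega)
  have hNW : Nonempty W := Fintype.card_pos_iff.mp (by omega)
  set J := joinGraph (⊥ : SimpleGraph V) (⊥ : SimpleGraph W) with hJ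
  constructor
  · intro hwf
    by_contra hcon
    push_neg at hcon
    obtain ⟨hne, hn1, hn2⟩ := hcon
    obtain ⟨v0⟩ := hNV
    obtain ⟨w0⟩ := hNW
    set X1 : Finset (V ⊕ W) :=
      insert (Sum.inr w0) ((Finset.univ : Finset V).image Sum.inl) with hX1
    set X2 : Finset (V ⊕ W) :=
      insert (Sum.inl v0) ((Finset.univ : Finset W).image Sum.inr) with hX2
    have hX1L : X1.toLeft = Finset.univ := by ext a; simp [hX1]
    have hX1R : X1.toRight = {w0} := by ext b; simp [hX1]
    have hX2L : X2.toLeft = {v0} := by ext a; simp [hX2]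
    have hX2R : X2.toRight = Finset.univ := by ext b; simp [hX2]
    have hm1 : IsMaximalInducedForest J X1 := by
      refine ⟨(join_forest_iff _).mpr (Or.inr (by simp [hX1R])), ?_⟩
      intro Y hY hYf
      have hYL : Y.toLeft = Finset.univ :=
        Finset.univ_subset_iff.mp (hX1L ▸ Finset.toLeft_subset_toLeft hY.1)
      obtain ⟨z, hzY, hzX⟩ := Finset.exists_of_ssubset hY
      cases z with
      | inl a => exact hzX (by simp [hX1])
      | inr b =>
        have hbw : b ≠ w0 := fun h => hzX (by simp [hX1, h])
        have hbY : b ∈ Y.toRight := Finset.mem_toRight.mpr hzY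
        have hw0Y : w0 ∈ Y.toRight := Finset.mem_toRight.mpr (hY.1 (by simp [hX1]))
        have h2R : 1 < Y.toRight.card := Finset.one_lt_card.mpr ⟨b, hbY, w0, hw0Y, hbw⟩
        have h2L : 1 < Y.toLeft.card := by
          rw [hYL, Finset.card_univ, hV]; omega
        rcases (join_forest_iff Y).mp hYf with h | h <;> omega
    have hm2 : IsMaximalInducedForest J X2 := by
      refine ⟨(join_forest_iff _).mpr (Or.inl (by simp [hX2L])), ?_⟩
      intro Y hY hYf
      have hYR : Y.toRight = Finset.univ :=
        Finset.univ_subset_iff.mp (hX2R ▸ Finset.toRight_subset_toRight hY.1)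
      obtain ⟨z, hzY, hzX⟩ := Finset.exists_of_ssubset hY
      cases z with
      | inr b => exact hzX (by simp [hX2])
      | inl a =>
        have hav : a ≠ v0 := fun h => hzX (by simp [hX2, h])
        have haY : a ∈ Y.toLeft := Finset.mem_toLeft.mpr hzY
        have hv0Y : v0 ∈ Y.toLeft := Finset.mem_toLeft.mpr (hY.1 (by simp [hX2]))
        have h2L : 1 < Y.toLeft.card := Finset.one_lt_card.mpr ⟨a, haY, v0, hv0Y, hav⟩
        have h2R : 1 < Y.toRight.card := by
          rw [hYR, Finset.card_univ, hW]; omega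
        rcases (join_forest_iff Y).mp hYf with h | h <;> omega
    have heq := hwf X1 X2 hm1 hm2
    have hc1 : X1.card = n₁ + 1 := by
      rw [← Finset.card_toLeft_add_card_toRight, hX1L, hX1R, Finset.card_univ, hV,
        Finset.card_singleton]
    have hc2 : X2.card = n₂ + 1 := by
      rw [← Finset.card_toLeft_add_card_toRight, hX2L, hX2R, Finset.card_univ, hW,
        Finset.card_singleton]
      omega
    omega
  · intro h X Y hX hY
    have key1 : n₁ = 1 → ∀ Z : Finset (V ⊕ W),
        IsMaximalInducedForest J Z → Z = Finset.univ := by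
      intro hone Z hZ
      by_contra hne
      refine hZ.2 Finset.univ (Finset.ssubset_univ_iff.mpr hne) ?_
      refine (join_forest_iff _).mpr (Or.inl ?_)
      exact le_trans (Finset.card_le_univ _) (by rw [hV, hone])
    have key2 : n₂ = 1 → ∀ Z : Finset (V ⊕ W),
        IsMaximalInducedForest J Z → Z = Finset.univ := by
      intro hone Z hZ
      by_contra hne
      refine hZ.2 Finset.univ (Finset.ssubset_univ_iff.mpr hne) ?_
      refine (join_forest_iff _).mpr (Or.inr ?_)
      exact le_trans (Finset.card_le_univ _) (by rw [hW, hone])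
    rcases h with hnn | hone | hone
    · by_cases hone : n₁ = 1
      · rw [key1 hone X hX, key1 hone Y hY]
      · have cardX : X.card = n₁ + 1 ∨ X.card = n₂ + 1 := by
          rcases join_maximal_card X hX with ⟨hL, hR⟩ | ⟨hR, hL⟩
          · left
            rw [← Finset.card_toLeft_add_card_toRight, hL, hR, Finset.card_univ, hV]
          · right
            rw [← Finset.card_toLeft_add_card_toRight, hL, hR, Finset.card_univ, hW]
            omega
        have cardY : Y.card = n₁ + 1 ∨ Y.card = n₂ + 1 := by
          rcases join_maximal_card Y hY with ⟨hL, hR⟩ | ⟨hR, hL⟩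
          · left
            rw [← Finset.card_toLeft_add_card_toRight, hL, hR, Finset.card_univ, hV]
          · right
            rw [← Finset.card_toLeft_add_card_toRight, hL, hR, Finset.card_univ, hW]
            omega
        omega
    · rw [key1 hone X hX, key1 hone Y hY]
    · rw [key2 hone X hX, key2 hone Y hY]
end

section
/- For r ≥ 1 and s ≥ 1, the complete bipartite graph K_{r,s} is well-f-covered if and only if r = s or r = 1 or s = 1. -/
section Aux

open SimpleGraph

/-- A subgraph of a star is acyclic. -/
lemma star_isAcyclic {W : Type*} {H : SimpleGraph W} {c : W}
    (h : ∀ u v, H.Adj u v → u = c ∨ v = c) : H.IsAcyclic := by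
  intro v p hp
  have h3 := hp.three_le_length
  cases p with
  | nil => simp at h3
  | @cons _ x₁ _ h₁ q =>
    have hnd : q.support.Nodup := by
      have := hp.support_nodup
      rwa [SimpleGraph.Walk.support_cons, List.tail_cons] at this
    cases q with
    | nil => simp at h3
    | @cons _ x₂ _ h₂ q' =>
      cases q' with
      | nil => simp at h3
      | @cons _ x₃ _ h₃ q'' =>
        rw [SimpleGraph.Walk.support_cons, SimpleGraph.Walk.support_cons,
          List.nodup_cons, List.nodup_cons] at hnd
        obtain ⟨hx₁, hx₂, -⟩ := hnd
        have hx₁x₂ : x₁ ≠ x₂ := by simp at hx₁; exact hx₁.1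
        have hx₁s : x₁ ∉ q''.support := by simp at hx₁; exact hx₁.2
        have hv : v ∈ q''.support := q''.end_mem_support
        have hx₃ : x₃ ∈ q''.support := q''.start_mem_support
        rcases h _ _ h₂ with rfl | rfl
        · rcases h _ _ h₃ with h' | h'
          · exact hx₁x₂ h'.symm
          · exact hx₁s (h' ▸ hx₃)
        · rcases h _ _ h₁ with h' | h'
          · exact hx₂ (h' ▸ hv)
          · exact hx₁x₂ h'

lemma acyclic_of_no_adj {W : Type*} {H : SimpleGraph W} (h : ∀ u v, ¬H.Adj u v) :
    H.IsAcyclic := by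
  intro v p hp
  cases p with
  | nil => have := hp.three_le_length; simp at this
  | cons h₁ q => exact h _ _ h₁

lemma forest_of_center {V : Type*} (G : SimpleGraph V) (X : Finset V) (w : V)
    (h : ∀ u ∈ X, ∀ v ∈ X, G.Adj u v → u = w ∨ v = w) : IsInducedForest G X := by
  by_cases hw : w ∈ X
  · apply star_isAcyclic (c := (⟨w, hw⟩ : (X : Set V)))
    rintro ⟨u, hu⟩ ⟨v, hv⟩ hadj
    rcases h u hu v hv hadj with rfl | rfl
    · exact Or.inl rfl
    · exact Or.inr rfl
  · apply acyclic_of_no_adj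
    rintro ⟨u, hu⟩ ⟨v, hv⟩ hadj
    rcases h u hu v hv hadj with rfl | rfl <;> exact hw (by exact_mod_cast ‹_›)

lemma forest_left {r s : ℕ} (hr : 1 ≤ r) (X : Finset (Fin r ⊕ Fin s))
    (h : X.toLeft.card ≤ 1) :
    IsInducedForest (completeBipartiteGraph (Fin r) (Fin s)) X := by
  have : Nonempty (Fin r) := ⟨⟨0, hr⟩⟩
  obtain ⟨a, ha⟩ := Finset.card_le_one_iff_subset_singleton.mp h
  apply forest_of_center _ _ (Sum.inl a)
  rintro (u | u) hu (v | v) hv hadj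
  · simp at hadj
  · left
    have : u ∈ X.toLeft := by simpa using hu
    have := ha this
    simp_all
  · right
    have : v ∈ X.toLeft := by simpa using hv
    have := ha this
    simp_all
  · simp at hadj

lemma forest_right {r s : ℕ} (hs : 1 ≤ s) (X : Finset (Fin r ⊕ Fin s))
    (h : X.toRight.card ≤ 1) :
    IsInducedForest (completeBipartiteGraph (Fin r) (Fin s)) X := by
  have : Nonempty (Fin s) := ⟨⟨0, hs⟩⟩
  obtain ⟨b, hb⟩ := Finset.card_le_one_iff_subset_singleton.mp h
  apply forest_of_center _ _ (Sum.inr b)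
  rintro (u | u) hu (v | v) hv hadj
  · simp at hadj
  · right
    have : v ∈ X.toRight := by simpa using hv
    have := hb this
    simp_all
  · left
    have : u ∈ X.toRight := by simpa using hu
    have := hb this
    simp_all
  · simp at hadj

lemma not_forest_of_two_two {r s : ℕ} {X : Finset (Fin r ⊕ Fin s)} {a0 a1 : Fin r}
    {b0 b1 : Fin s} (ha : a0 ≠ a1) (hb : b0 ≠ b1)
    (h0 : Sum.inl a0 ∈ X) (h1 : Sum.inl a1 ∈ X)
    (h2 : Sum.inr b0 ∈ X) (h3 : Sum.inr b1 ∈ X) :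
    ¬ IsInducedForest (completeBipartiteGraph (Fin r) (Fin s)) X := by
  intro hF
  set G := completeBipartiteGraph (Fin r) (Fin s) with hG
  set H := G.induce (X : Set _) with hH
  let A0 : (X : Set (Fin r ⊕ Fin s)) := ⟨Sum.inl a0, h0⟩
  let A1 : (X : Set (Fin r ⊕ Fin s)) := ⟨Sum.inl a1, h1⟩
  let B0 : (X : Set (Fin r ⊕ Fin s)) := ⟨Sum.inr b0, h2⟩
  let B1 : (X : Set (Fin r ⊕ Fin s)) := ⟨Sum.inr b1, h3⟩
  have e1 : H.Adj A0 B0 := by exact Or.inl ⟨rfl, rfl⟩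
  have e2 : H.Adj B0 A1 := by exact Or.inr ⟨rfl, rfl⟩
  have e3 : H.Adj A1 B1 := by exact Or.inl ⟨rfl, rfl⟩
  have e4 : H.Adj B1 A0 := by exact Or.inr ⟨rfl, rfl⟩
  let w : H.Walk A0 A0 := .cons e1 (.cons e2 (.cons e3 (.cons e4 .nil)))
  apply hF w
  constructor
  · constructor
    · rw [SimpleGraph.Walk.isTrail_def]
      simp [w, SimpleGraph.Walk.edges_cons, Subtype.ext_iff, Sym2.eq_iff, A0, A1, B0, B1,
        ha, hb, ha.symm, hb.symm]
    · simp [w]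
  · simp [w, SimpleGraph.Walk.support_cons, Subtype.ext_iff, A0, A1, B0, B1, ha, hb,
      ha.symm, hb.symm]

lemma left_le_or_right_le {r s : ℕ} {X : Finset (Fin r ⊕ Fin s)}
    (hX : IsInducedForest (completeBipartiteGraph (Fin r) (Fin s)) X) :
    X.toLeft.card ≤ 1 ∨ X.toRight.card ≤ 1 := by
  by_contra hc
  push_neg at hc
  obtain ⟨hl, hrt⟩ := hc
  obtain ⟨a0, ha0, a1, ha1, ha⟩ := Finset.one_lt_card.mp hl
  obtain ⟨b0, hb0, b1, hb1, hb⟩ := Finset.one_lt_card.mp hrt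
  exact not_forest_of_two_two ha hb (Finset.mem_toLeft.mp ha0) (Finset.mem_toLeft.mp ha1)
    (Finset.mem_toRight.mp hb0) (Finset.mem_toRight.mp hb1) hX

lemma card_of_maximal_left {r s : ℕ} (hr : 1 ≤ r) {X : Finset (Fin r ⊕ Fin s)}
    (hX : IsMaximalInducedForest (completeBipartiteGraph (Fin r) (Fin s)) X)
    (hl : X.toLeft.card ≤ 1) : X.card = s + 1 := by
  have hright : X.toRight = Finset.univ := by
    by_contra hne
    rw [Finset.eq_univ_iff_forall] at hne
    push_neg at hne
    obtain ⟨b, hb⟩ := hne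
    have hbX : Sum.inr b ∉ X := fun h => hb (Finset.mem_toRight.mpr h)
    apply hX.2 (insert (Sum.inr b) X) (Finset.ssubset_insert hbX)
    apply forest_left hr
    have heq : (insert (Sum.inr b) X).toLeft = X.toLeft := by ext x; simp
    rw [heq]; exact hl
  have hleft : X.toLeft.card = 1 := by
    rcases Nat.lt_or_ge X.toLeft.card 1 with h0 | h1
    · exfalso
      have he : X.toLeft = ∅ := Finset.card_eq_zero.mp (by omega)
      have hnm : Sum.inl (⟨0, hr⟩ : Fin r) ∉ X := by
        intro h
        have : (⟨0, hr⟩ : Fin r) ∈ X.toLeft := Finset.mem_toLeft.mpr h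
        simp [he] at this
      apply hX.2 (insert (Sum.inl ⟨0, hr⟩) X) (Finset.ssubset_insert hnm)
      apply forest_left hr
      have heq : (insert (Sum.inl (⟨0, hr⟩ : Fin r)) X).toLeft
          = insert (⟨0, hr⟩ : Fin r) X.toLeft := by ext x; simp
      rw [heq, he]
      simp
    · omega
  have hc := Finset.card_toLeft_add_card_toRight (u := X)
  rw [hleft, hright] at hc
  simp only [Finset.card_univ, Fintype.card_fin] at hc
  omega

lemma card_of_maximal_right {r s : ℕ} (hs : 1 ≤ s) {X : Finset (Fin r ⊕ Fin s)}
    (hX : IsMaximalInducedForest (completeBipartiteGraph (Fin r) (Fin s)) X)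
    (hl : X.toRight.card ≤ 1) : X.card = r + 1 := by
  have hleftu : X.toLeft = Finset.univ := by
    by_contra hne
    rw [Finset.eq_univ_iff_forall] at hne
    push_neg at hne
    obtain ⟨a, ha⟩ := hne
    have haX : Sum.inl a ∉ X := fun h => ha (Finset.mem_toLeft.mpr h)
    apply hX.2 (insert (Sum.inl a) X) (Finset.ssubset_insert haX)
    apply forest_right hs
    have heq : (insert (Sum.inl a) X).toRight = X.toRight := by ext x; simp
    rw [heq]; exact hl
  have hright : X.toRight.card = 1 := by
    rcases Nat.lt_or_ge X.toRight.card 1 with h0 | h1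
    · exfalso
      have he : X.toRight = ∅ := Finset.card_eq_zero.mp (by omega)
      have hnm : Sum.inr (⟨0, hs⟩ : Fin s) ∉ X := by
        intro h
        have : (⟨0, hs⟩ : Fin s) ∈ X.toRight := Finset.mem_toRight.mpr h
        simp [he] at this
      apply hX.2 (insert (Sum.inr ⟨0, hs⟩) X) (Finset.ssubset_insert hnm)
      apply forest_right hs
      have heq : (insert (Sum.inr (⟨0, hs⟩ : Fin s)) X).toRight
          = insert (⟨0, hs⟩ : Fin s) X.toRight := by ext x; simp
      rw [heq, he]
      simp
    · omega
  have hc := Finset.card_toLeft_add_card_toRight (u := X)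
  rw [hright, hleftu] at hc
  simp only [Finset.card_univ, Fintype.card_fin] at hc
  omega

end Aux

/-- For `r ≥ 1` and `s ≥ 1`, the complete bipartite graph `K_{r,s}` is
well-f-covered if and only if `r = s` or `r = 1` or `s = 1`. -/
theorem stmt19 (r s : ℕ) (hr : 1 ≤ r) (hs : 1 ≤ s) :
    WellFCovered (completeBipartiteGraph (Fin r) (Fin s)) ↔
      (r = s ∨ r = 1 ∨ s = 1) := by
  constructor
  · intro hW
    by_contra hc
    push_neg at hc
    obtain ⟨hrs, hr1, hs1⟩ := hc
    have hr2 : 2 ≤ r := by omega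
    have hs2 : 2 ≤ s := by omega
    set X := (Finset.univ : Finset (Fin r)).disjSum ({⟨0, hs⟩} : Finset (Fin s)) with hXdef
    set Y := ({⟨0, hr⟩} : Finset (Fin r)).disjSum (Finset.univ : Finset (Fin s)) with hYdef
    have hXmax : IsMaximalInducedForest (completeBipartiteGraph (Fin r) (Fin s)) X := by
      constructor
      · apply forest_right hs
        rw [hXdef, Finset.toRight_disjSum]
        simp
      · intro Z hZ hF
        obtain ⟨v, hvZ, hvX⟩ := Finset.exists_of_ssubset hZ
        have hsub := hZ.subset
        cases v with
        | inl a => exact hvX (by simp [hXdef])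
        | inr b =>
          have hbne : b ≠ ⟨0, hs⟩ := by
            intro h; apply hvX; simp [hXdef, h]
          refine not_forest_of_two_two (a0 := ⟨0, by omega⟩) (a1 := ⟨1, by omega⟩)
            (b0 := ⟨0, hs⟩) (b1 := b) ?_ hbne.symm ?_ ?_ ?_ hvZ hF
          · simp [Fin.ext_iff]
          · exact hsub (by simp [hXdef])
          · exact hsub (by simp [hXdef])
          · exact hsub (by simp [hXdef])
    have hYmax : IsMaximalInducedForest (completeBipartiteGraph (Fin r) (Fin s)) Y := by
      constructor
      · apply forest_left hr
        rw [hYdef, Finset.toLeft_disjSum]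
        simp
      · intro Z hZ hF
        obtain ⟨v, hvZ, hvY⟩ := Finset.exists_of_ssubset hZ
        have hsub := hZ.subset
        cases v with
        | inr b => exact hvY (by simp [hYdef])
        | inl a =>
          have hane : a ≠ ⟨0, hr⟩ := by
            intro h; apply hvY; simp [hYdef, h]
          refine not_forest_of_two_two (a0 := ⟨0, hr⟩) (a1 := a)
            (b0 := ⟨0, by omega⟩) (b1 := ⟨1, by omega⟩) hane.symm ?_ ?_ hvZ ?_ ?_ hF
          · simp [Fin.ext_iff]
          · exact hsub (by simp [hYdef])
          · exact hsub (by simp [hYdef])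
          · exact hsub (by simp [hYdef])
    have hcard := hW X Y hXmax hYmax
    rw [hXdef, hYdef, Finset.card_disjSum, Finset.card_disjSum] at hcard
    simp only [Finset.card_univ, Fintype.card_fin, Finset.card_singleton] at hcard
    omega
  · intro h X Y hX hY
    rcases h with rfl | hr1 | hs1
    · have key : ∀ Z : Finset (Fin r ⊕ Fin r),
          IsMaximalInducedForest (completeBipartiteGraph (Fin r) (Fin r)) Z →
          Z.card = r + 1 := by
        intro Z hZ
        rcases left_le_or_right_le hZ.1 with hl | hrt
        · exact card_of_maximal_left hr hZ hl
        · exact card_of_maximal_right hr hZ hrt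
      rw [key X hX, key Y hY]
    · subst hr1
      have key : ∀ Z : Finset (Fin 1 ⊕ Fin s),
          IsMaximalInducedForest (completeBipartiteGraph (Fin 1) (Fin s)) Z →
          Z.card = s + 1 := by
        intro Z hZ
        apply card_of_maximal_left hr hZ
        calc Z.toLeft.card ≤ (Finset.univ : Finset (Fin 1)).card :=
              Finset.card_le_card (Finset.subset_univ _)
          _ = 1 := by simp
      rw [key X hX, key Y hY]
    · subst hs1
      have key : ∀ Z : Finset (Fin r ⊕ Fin 1),
          IsMaximalInducedForest (completeBipartiteGraph (Fin r) (Fin 1)) Z →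
          Z.card = r + 1 := by
        intro Z hZ
        apply card_of_maximal_right hs hZ
        calc Z.toRight.card ≤ (Finset.univ : Finset (Fin 1)).card :=
              Finset.card_le_card (Finset.subset_univ _)
          _ = 1 := by simp
      rw [key X hX, key Y hY]
end
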